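/- arXiv:1407.0967 — 5 statements merged into one kernel-verified Lean document; each statement's English description precedes it below -/
import Mathlib

section
/- Let p > 3 be a prime. Then for every integer x, ∑_{k=1}^{p-1} g_k(x)/k ≡ 0 (mod p). -/
/-- `g n x = ∑_{k=0}^n (n choose k)² (2k choose k) xᵏ`. -/
def g (x : ℤ) (n : ℕ) : ℤ :=
  ∑ k ∈ Finset.range (n + 1), (n.choose k : ℤ) ^ 2 * ((2 * k).choose k : ℤ) * x ^ k

/-- For rationals, `a ≡ b (mod p^m)` means the p-adic valuation of `a - b` is at least `m`. -/
def ratCongr (p m : ℕ) (a b : ℚ) : Prop :=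
  a = b ∨ (m : ℤ) ≤ padicValRat p (a - b)

section Aux

open Finset Polynomial

variable {p : ℕ} [Fact p.Prime]

lemma sum_univ_zmod {M : Type*} [AddCommMonoid M] (f : ZMod p → M) :
    ∑ y : ZMod p, f y = ∑ m ∈ Finset.range p, f (m : ZMod p) := by
  haveI : NeZero p := ⟨(Fact.out : p.Prime).ne_zero⟩
  refine Finset.sum_nbij' (fun y => (y : ZMod p).val) (fun m => (m : ZMod p)) ?_ ?_ ?_ ?_ ?_
  · intro a _; exact Finset.mem_range.mpr (ZMod.val_lt _)
  · intro a _; exact Finset.mem_univ _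
  · intro a _; simp [ZMod.natCast_val, ZMod.cast_id]
  · intro a ha; exact ZMod.val_cast_of_lt (Finset.mem_range.mp ha)
  · intro a _; rw [ZMod.natCast_val, ZMod.cast_id]

lemma descFactorial_cast (R : Type*) [CommRing R] (m t : ℕ) :
    (m.descFactorial t : R) = ∏ i ∈ Finset.range t, ((m : R) - i) := by
  induction t with
  | zero => simp
  | succ t ih =>
    rw [Finset.prod_range_succ, ← ih, Nat.descFactorial_succ]
    rcases le_or_gt t m with h | h
    · push_cast [h]; ring
    · rw [Nat.descFactorial_eq_zero_iff_lt.mpr h]; simp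

lemma sum_eval_zero (Q : Polynomial (ZMod p)) (h : Q.natDegree < p - 1) :
    ∑ y : ZMod p, Q.eval y = 0 := by
  have hcard : Fintype.card (ZMod p) = p := ZMod.card p
  calc ∑ y : ZMod p, Q.eval y
      = ∑ y : ZMod p, ∑ i ∈ Finset.range (Q.natDegree + 1), Q.coeff i * y ^ i := by
        refine Finset.sum_congr rfl fun y _ => ?_
        exact Polynomial.eval_eq_sum_range _
    _ = ∑ i ∈ Finset.range (Q.natDegree + 1), Q.coeff i * ∑ y : ZMod p, y ^ i := by
        rw [Finset.sum_comm]
        exact Finset.sum_congr rfl fun i _ => by rw [Finset.mul_sum]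
    _ = 0 := by
        refine Finset.sum_eq_zero fun i hi => ?_
        have : ∑ y : ZMod p, y ^ i = 0 := by
          have := FiniteField.sum_pow_lt_card_sub_one (K := ZMod p) i
            (by rw [hcard]; exact lt_of_lt_of_le (Finset.mem_range.mp hi) h)
          exact this
        rw [this, mul_zero]

lemma sum_choose_sq (t : ℕ) (ht : 2 * t < p - 1) :
    ∑ m ∈ Finset.range p, ((m.choose t : ZMod p)) ^ 2 = 0 := by
  have hp : p.Prime := Fact.out
  set Q : Polynomial (ZMod p) := (∏ i ∈ Finset.range t, (X - C (i : ZMod p))) ^ 2 with hQ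
  have hmon : (∏ i ∈ Finset.range t, (X - C (i : ZMod p))).Monic :=
    monic_prod_of_monic _ _ fun i _ => monic_X_sub_C _
  have hdeg : Q.natDegree = 2 * t := by
    have h1 : (∏ i ∈ Finset.range t, (X - C (i : ZMod p))).natDegree = t := by
      have := natDegree_prod_of_monic (Finset.range t)
        (fun i => X - C (i : ZMod p)) (fun i _ => monic_X_sub_C _)
      simp only [natDegree_X_sub_C, Finset.sum_const, smul_eq_mul, mul_one,
        Finset.card_range] at this
      exact this
    rw [hQ, natDegree_pow, h1]
  have h0 : ∑ y : ZMod p, Q.eval y = 0 := sum_eval_zero Q (hdeg ▸ ht)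
  rw [sum_univ_zmod (fun y => Q.eval y)] at h0
  have heval : ∀ m : ℕ, Q.eval (m : ZMod p) = ((t.factorial : ZMod p) * (m.choose t : ZMod p)) ^ 2 := by
    intro m
    rw [hQ, eval_pow, eval_prod]
    have : ∀ i ∈ Finset.range t, ((X : Polynomial (ZMod p)) - C (i:ZMod p)).eval (m : ZMod p)
        = (m : ZMod p) - i := by intro i _; simp
    rw [Finset.prod_congr rfl this, ← descFactorial_cast,
      Nat.descFactorial_eq_factorial_mul_choose, Nat.cast_mul]
  have hfac : (t.factorial : ZMod p) ≠ 0 := by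
    rw [Ne, ZMod.natCast_eq_zero_iff]
    intro hdvd
    have := (Nat.Prime.dvd_factorial hp).mp hdvd
    omega
  have : ((t.factorial : ZMod p)) ^ 2 * ∑ m ∈ Finset.range p, ((m.choose t : ZMod p)) ^ 2 = 0 := by
    rw [Finset.mul_sum, ← h0]
    exact Finset.sum_congr rfl fun m _ => by rw [heval m]; ring
  rcases mul_eq_zero.mp this with h | h
  · exact absurd (pow_eq_zero_iff (by norm_num) |>.mp h) hfac
  · exact h

lemma choose_psub1 (j : ℕ) (hj : j ≤ p - 1) :
    (((p - 1).choose j : ZMod p)) = (-1) ^ j := by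
  have hp : p.Prime := Fact.out
  have hp2 : 2 ≤ p := hp.two_le
  induction j with
  | zero => simp
  | succ j ih =>
    have hpascal : (p - 1).choose j + (p - 1).choose (j + 1) = p.choose (j + 1) := by
      have := Nat.choose_succ_succ (p - 1) j
      rw [← this]
      congr 1
      omega
    have hzero : ((p.choose (j + 1) : ZMod p)) = 0 := by
      rw [ZMod.natCast_eq_zero_iff]
      exact hp.dvd_choose_self (Nat.succ_ne_zero j) (by omega)
    have := congrArg (fun n : ℕ => (n : ZMod p)) hpascal
    simp only [Nat.cast_add] at this
    rw [hzero] at this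
    have hih := ih (by omega)
    rw [hih] at this
    have : (((p - 1).choose (j + 1) : ZMod p)) = -(-1) ^ j := by linear_combination this
    rw [this, pow_succ]
    ring

lemma inv_eq_pow (a : ZMod p) (ha : a ≠ 0) : a⁻¹ = a ^ (p - 2) := by
  have hp : p.Prime := Fact.out
  have h1 : a ^ (p - 1) = 1 := ZMod.pow_card_sub_one_eq_one ha
  have h2 := hp.two_le
  have hm : a * a ^ (p - 2) = 1 := by
    rw [← pow_succ']
    have he : p - 2 + 1 = p - 1 := by omega
    rw [he, h1]
  exact inv_eq_of_mul_eq_one_right hm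

lemma sum_inv_zero (hp3 : 3 < p) :
    ∑ k ∈ Finset.Icc 1 (p - 1), ((k : ZMod p))⁻¹ = 0 := by
  have hp : p.Prime := Fact.out
  have h1 : ∀ k ∈ Finset.Icc 1 (p - 1), ((k : ZMod p))⁻¹ = (k : ZMod p) ^ (p - 2) := by
    intro k hk
    rw [Finset.mem_Icc] at hk
    apply inv_eq_pow
    rw [Ne, ZMod.natCast_eq_zero_iff]
    intro hdvd
    have := Nat.le_of_dvd (by omega) hdvd
    omega
  rw [Finset.sum_congr rfl h1]
  have hicc : Finset.Icc 1 (p - 1) = Finset.Ico 1 p := by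
    rw [← Finset.Ico_add_one_right_eq_Icc]
    congr 1
    omega
  have hsplit : ∑ k ∈ Finset.range p, ((k : ZMod p)) ^ (p - 2)
      = ((0:ZMod p)) ^ (p - 2) + ∑ k ∈ Finset.Ico 1 p, ((k : ZMod p)) ^ (p - 2) := by
    rw [Finset.range_eq_Ico, Finset.sum_eq_sum_Ico_succ_bot (by omega : 0 < p)]
    simp
  have hall : ∑ k ∈ Finset.range p, ((k : ZMod p)) ^ (p - 2) = 0 := by
    rw [← sum_univ_zmod (fun y : ZMod p => y ^ (p - 2))]
    have hcard : Fintype.card (ZMod p) = p := ZMod.card p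
    exact FiniteField.sum_pow_lt_card_sub_one (K := ZMod p) (p - 2) (by rw [hcard]; omega)
  rw [hicc]
  have h0 : ((0:ZMod p)) ^ (p - 2) = 0 := by
    apply zero_pow
    omega
  rw [hall, h0, zero_add] at hsplit
  exact hsplit.symm

lemma two_ne_zero_zmod (hp3 : 3 < p) : (2 : ZMod p) ≠ 0 := by
  have : ((2 : ℕ) : ZMod p) ≠ 0 := by
    rw [Ne, ZMod.natCast_eq_zero_iff]
    intro h
    have := Nat.le_of_dvd (by norm_num) h
    omega
  simpa using this

lemma natCast_ne_zero_of_lt {k : ℕ} (hk1 : 1 ≤ k) (hk2 : k < p) : (k : ZMod p) ≠ 0 := by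
  rw [Ne, ZMod.natCast_eq_zero_iff]
  intro h
  have := Nat.le_of_dvd (by omega) h
  omega

lemma inner_sum_zero (hp3 : 3 < p) (j : ℕ) (hj1 : 1 ≤ j) (hj2 : 2 * j < p) :
    ∑ k ∈ Finset.Icc 1 (p - 1), ((k.choose j : ZMod p)) ^ 2 * ((k : ZMod p))⁻¹ = 0 := by
  have hp : p.Prime := Fact.out
  obtain ⟨j', rfl⟩ : ∃ j', j = j' + 1 := ⟨j - 1, by omega⟩
  set j := j' + 1 with hj
  have hjne : ((j : ℕ) : ZMod p) ≠ 0 := natCast_ne_zero_of_lt (by omega) (by omega)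
  -- Step 1 : termwise rewrite
  have hterm : ∀ k ∈ Finset.Icc 1 (p - 1),
      ((k.choose j : ZMod p)) ^ 2 * ((k : ZMod p))⁻¹
      = ((k.choose j : ZMod p)) * (((k - 1).choose j' : ZMod p)) * ((j : ZMod p))⁻¹ := by
    intro k hk
    rw [Finset.mem_Icc] at hk
    have hkne : ((k : ℕ) : ZMod p) ≠ 0 := natCast_ne_zero_of_lt hk.1 (by omega)
    have hid : k * (k - 1).choose j' = k.choose j * j := by
      have := Nat.add_one_mul_choose_eq (k - 1) j'
      have hk1 : k - 1 + 1 = k := by omega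
      simpa [Nat.succ_eq_add_one, hk1] using this
    have hcast : ((k : ZMod p)) * (((k - 1).choose j' : ZMod p))
        = ((k.choose j : ZMod p)) * ((j : ZMod p)) := by
      have := congrArg (fun n : ℕ => (n : ZMod p)) hid
      push_cast at this
      convert this using 2 <;> push_cast <;> ring
    field_simp
    linear_combination (-(k.choose j : ZMod p)) * hcast
  rw [Finset.sum_congr rfl hterm]
  -- Step 2 : factor out j⁻¹ and reindex
  rw [← Finset.sum_mul]
  have hreindex : ∑ k ∈ Finset.Icc 1 (p - 1),
      ((k.choose j : ZMod p)) * (((k - 1).choose j' : ZMod p))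
      = ∑ i ∈ Finset.range (p - 1), (((i + 1).choose j : ZMod p)) * ((i.choose j' : ZMod p)) := by
    have hicc : Finset.Icc 1 (p - 1) = Finset.Ico 1 p := by
      rw [← Finset.Ico_add_one_right_eq_Icc]; congr 1; omega
    rw [hicc, Finset.sum_Ico_eq_sum_range]
    refine Finset.sum_congr (by congr 1) fun i _ => ?_
    rw [Nat.add_comm 1 i, Nat.add_sub_cancel]
  rw [hreindex]
  -- Step 3 : the reindexed sum is zero
  have h2S : (2 : ZMod p) * ∑ i ∈ Finset.range (p - 1),
      (((i + 1).choose j : ZMod p)) * ((i.choose j' : ZMod p))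
      = (∑ i ∈ Finset.range (p - 1), ((i.choose j' : ZMod p)) ^ 2)
        + ((((p - 1).choose j : ZMod p)) ^ 2 - (((0 : ℕ).choose j : ZMod p)) ^ 2) := by
    rw [Finset.mul_sum, ← Finset.sum_range_sub (fun i => ((i.choose j : ZMod p)) ^ 2),
      ← Finset.sum_add_distrib]
    refine Finset.sum_congr rfl fun i _ => ?_
    have hpascal : (i + 1).choose j = i.choose j' + i.choose j := Nat.choose_succ_succ i j'
    have := congrArg (fun n : ℕ => (n : ZMod p)) hpascal
    push_cast at this
    rw [this]
    ring
  have hsq : ∀ (a : ZMod p) (n : ℕ), a = (-1) ^ n → a ^ 2 = 1 := by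
    intro a n ha
    rw [ha, ← pow_mul, mul_comm, pow_mul]
    simp
  have hsum' : ∑ i ∈ Finset.range (p - 1), ((i.choose j' : ZMod p)) ^ 2 = -1 := by
    have hfull := sum_choose_sq (p := p) j' (by omega)
    have hsplit : ∑ m ∈ Finset.range p, ((m.choose j' : ZMod p)) ^ 2
        = (∑ i ∈ Finset.range (p - 1), ((i.choose j' : ZMod p)) ^ 2)
          + (((p - 1).choose j' : ZMod p)) ^ 2 := by
      have h := Finset.sum_range_succ (fun m => ((m.choose j' : ZMod p)) ^ 2) (p - 1)
      rw [show p - 1 + 1 = p from by omega] at h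
      exact h
    rw [hsplit, hsq _ j' (choose_psub1 j' (by omega))] at hfull
    linear_combination hfull
  have hlast : (((p - 1).choose j : ZMod p)) ^ 2 = 1 := hsq _ j (choose_psub1 j (by omega))
  have h0 : (((0 : ℕ).choose j : ZMod p)) = 0 := by
    rw [Nat.choose_eq_zero_of_lt (by omega)]
    simp
  rw [hsum', hlast, h0] at h2S
  have hS : ∑ i ∈ Finset.range (p - 1), (((i + 1).choose j : ZMod p)) * ((i.choose j' : ZMod p)) = 0 := by
    have h2 : (2 : ZMod p) ≠ 0 := two_ne_zero_zmod hp3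
    have h2S0 : (2 : ZMod p) * ∑ i ∈ Finset.range (p - 1),
        (((i + 1).choose j : ZMod p)) * ((i.choose j' : ZMod p)) = 0 := by
      rw [h2S]; norm_num
    exact (mul_eq_zero.mp h2S0).resolve_left h2
  rw [hS, zero_mul]

lemma main_zmod (hp3 : 3 < p) (x : ℤ) :
    ∑ k ∈ Finset.Icc 1 (p - 1), ((g x k : ZMod p)) * ((k : ZMod p))⁻¹ = 0 := by
  have hp : p.Prime := Fact.out
  have hg : ∀ k ∈ Finset.Icc 1 (p - 1), ((g x k : ZMod p))
      = ∑ j ∈ Finset.range p,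
        ((k.choose j : ZMod p)) ^ 2 * (((2 * j).choose j : ZMod p)) * ((x : ZMod p)) ^ j := by
    intro k hk
    rw [Finset.mem_Icc] at hk
    have hsub : Finset.range (k + 1) ⊆ Finset.range p := Finset.range_subset_range.mpr (by omega)
    rw [g]
    push_cast
    refine Finset.sum_subset hsub ?_
    intro j _ hj
    rw [Finset.mem_range, not_lt] at hj
    rw [Nat.choose_eq_zero_of_lt (by omega)]
    simp
  calc ∑ k ∈ Finset.Icc 1 (p - 1), ((g x k : ZMod p)) * ((k : ZMod p))⁻¹
      = ∑ k ∈ Finset.Icc 1 (p - 1), ∑ j ∈ Finset.range p,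
          ((k.choose j : ZMod p)) ^ 2 * (((2 * j).choose j : ZMod p)) * ((x : ZMod p)) ^ j
            * ((k : ZMod p))⁻¹ := by
        refine Finset.sum_congr rfl fun k hk => ?_
        rw [hg k hk, Finset.sum_mul]
    _ = ∑ j ∈ Finset.range p, ∑ k ∈ Finset.Icc 1 (p - 1),
          ((k.choose j : ZMod p)) ^ 2 * (((2 * j).choose j : ZMod p)) * ((x : ZMod p)) ^ j
            * ((k : ZMod p))⁻¹ := Finset.sum_comm
    _ = ∑ j ∈ Finset.range p, (((2 * j).choose j : ZMod p)) * ((x : ZMod p)) ^ j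
          * ∑ k ∈ Finset.Icc 1 (p - 1), ((k.choose j : ZMod p)) ^ 2 * ((k : ZMod p))⁻¹ := by
        refine Finset.sum_congr rfl fun j _ => ?_
        rw [Finset.mul_sum]
        exact Finset.sum_congr rfl fun k _ => by ring
    _ = 0 := by
        refine Finset.sum_eq_zero fun j hj => ?_
        rw [Finset.mem_range] at hj
        by_cases h2j : p ≤ 2 * j
        · have : (((2 * j).choose j : ZMod p)) = 0 := by
            rw [ZMod.natCast_eq_zero_iff]
            exact hp.dvd_choose hj (by omega) h2j
          rw [this]
          ring
        · push_neg at h2j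
          rcases Nat.eq_zero_or_pos j with hj0 | hj0
          · subst hj0
            have : ∑ k ∈ Finset.Icc 1 (p - 1), ((k.choose 0 : ZMod p)) ^ 2 * ((k : ZMod p))⁻¹
                = ∑ k ∈ Finset.Icc 1 (p - 1), ((k : ZMod p))⁻¹ := by
              refine Finset.sum_congr rfl fun k _ => by simp
            rw [this, sum_inv_zero hp3, mul_zero]
          · rw [inner_sum_zero hp3 j hj0 h2j, mul_zero]

theorem sum_g_div_k_aux (p : ℕ) (hp : p.Prime) (hp3 : 3 < p) (x : ℤ) :
    (∑ k ∈ Finset.Icc 1 (p - 1), (g x k : ℚ) / (k : ℚ)) = 0 ∨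
      (1 : ℤ) ≤ padicValRat p ((∑ k ∈ Finset.Icc 1 (p - 1), (g x k : ℚ) / (k : ℚ)) - 0) := by
  haveI : Fact p.Prime := ⟨hp⟩
  set S : ℚ := ∑ k ∈ Finset.Icc 1 (p - 1), (g x k : ℚ) / (k : ℚ) with hS
  set m : ℕ → ℕ := fun k => (p - 1).factorial / k with hm
  set N : ℤ := ∑ k ∈ Finset.Icc 1 (p - 1), g x k * (m k : ℤ) with hN
  have hfac_pos : 0 < (p - 1).factorial := Nat.factorial_pos _
  have hmk : ∀ k ∈ Finset.Icc 1 (p - 1), (m k) * k = (p - 1).factorial := by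
    intro k hk
    rw [Finset.mem_Icc] at hk
    exact Nat.div_mul_cancel (Nat.dvd_factorial (by omega) hk.2)
  have hmpos : ∀ k ∈ Finset.Icc 1 (p - 1), 0 < m k := by
    intro k hk
    have hk' := Finset.mem_Icc.mp hk
    exact Nat.div_pos (Nat.le_of_dvd hfac_pos (Nat.dvd_factorial (by omega) hk'.2)) (by omega)
  -- S = N / (p-1)!
  have hSeq : S = (N : ℚ) / (((p - 1).factorial : ℕ) : ℚ) := by
    rw [hS, hN]
    push_cast
    rw [Finset.sum_div]
    refine Finset.sum_congr rfl fun k hk => ?_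
    have hk' := Finset.mem_Icc.mp hk
    have hmkq : ((m k : ℕ) : ℚ) ≠ 0 := by
      have := hmpos k hk
      positivity
    have hD : (((p - 1).factorial : ℕ) : ℚ) = ((m k : ℕ) : ℚ) * (k : ℚ) := by
      rw [← Nat.cast_mul, hmk k hk]
    rw [hD, mul_comm ((g x k : ℚ)) _, mul_div_mul_left _ _ hmkq]
  -- p ∣ N
  have hdvd : (p : ℤ) ∣ N := by
    rw [← ZMod.intCast_zmod_eq_zero_iff_dvd]
    have hNc : ((N : ℤ) : ZMod p) = ∑ k ∈ Finset.Icc 1 (p - 1),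
        ((g x k : ZMod p)) * (((m k : ℕ) : ZMod p)) := by
      rw [hN]; push_cast; rfl
    rw [hNc]
    have hterm : ∀ k ∈ Finset.Icc 1 (p - 1),
        ((g x k : ZMod p)) * (((m k : ℕ) : ZMod p))
        = (((p - 1).factorial : ZMod p)) * (((g x k : ZMod p)) * ((k : ZMod p))⁻¹) := by
      intro k hk
      have hk' := Finset.mem_Icc.mp hk
      have hkne : ((k : ℕ) : ZMod p) ≠ 0 := natCast_ne_zero_of_lt hk'.1 (by omega)
      have hcast : (((m k : ℕ) : ZMod p)) * ((k : ZMod p))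
          = (((p - 1).factorial : ZMod p)) := by
        rw [← Nat.cast_mul, hmk k hk]
      have heq : (((m k : ℕ) : ZMod p))
          = (((p - 1).factorial : ZMod p)) * ((k : ZMod p))⁻¹ := by
        field_simp [hkne, ← hcast]
        exact hcast
      rw [heq]; ring
    rw [Finset.sum_congr rfl hterm, ← Finset.mul_sum, main_zmod hp3 x, mul_zero]
  by_cases hS0 : S = 0
  · exact Or.inl hS0
  · right
    rw [sub_zero]
    have hNne : N ≠ 0 := by
      intro h
      rw [h] at hSeq
      simp at hSeq
      exact hS0 hSeq
    have hDne : (((p - 1).factorial : ℕ) : ℚ) ≠ 0 := by positivity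
    have hNq : ((N : ℤ) : ℚ) ≠ 0 := Int.cast_ne_zero.mpr hNne
    rw [hSeq, padicValRat.div hNq hDne]
    have hvN : (1 : ℤ) ≤ padicValRat p ((N : ℤ) : ℚ) := by
      rw [padicValRat.of_int]
      have h1 : 1 ≤ padicValNat p N.natAbs :=
        one_le_padicValNat_of_dvd (Int.natAbs_ne_zero.mpr hNne) (Int.natCast_dvd.mp hdvd)
      unfold padicValInt
      exact_mod_cast h1
    have hvD : padicValRat p (((p - 1).factorial : ℕ) : ℚ) = 0 := by
      rw [padicValRat.of_nat]
      have hnd : ¬ p ∣ (p - 1).factorial := by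
        rw [Nat.Prime.dvd_factorial hp]
        omega
      rw [padicValNat.eq_zero_of_not_dvd hnd]
      simp
    rw [hvD]
    omega


end Aux

theorem sum_g_div_k (p : ℕ) (hp : p.Prime) (hp3 : 3 < p) (x : ℤ) :
    ratCongr p 1 (∑ k ∈ Finset.Icc 1 (p - 1), (g x k : ℚ) / (k : ℚ)) 0 := by
  have h := sum_g_div_k_aux p hp hp3 x
  unfold ratCongr
  simpa using h
end

section
/- For every positive integer n, ∑_{k=0}^{n-1} (3k+1)·f_k·8^{n-1-k} = n²·∑_{k=0}^{n-1} (n−1 choose k)³·(1 − n/(k+1) + n²/(k+1)²), as an identity of rational numbers. -/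
/-- The Franel numbers `f n = ∑_{k=0}^n (n choose k)³`. -/
def franel (n : ℕ) : ℤ := ∑ k ∈ Finset.range (n + 1), (n.choose k : ℤ) ^ 3

namespace FranelAux

open Finset

/-- Certificate polynomial for the Zeilberger certificate of the Franel recurrence. -/
def P (n k : ℚ) : ℚ :=
  k^3*(-72-200*n-202*n^2-88*n^3-14*n^4) + k^4*(78+171*n+120*n^2+27*n^3)
  + k^5*(-30-48*n-18*n^2) + k^6*(4+4*n)

/-- The certificate telescoping term. -/
def G (n k : ℕ) : ℚ := ((n+2).choose k : ℚ)^3 * P n k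

lemma cast_row (n k : ℕ) :
    ((n + 1 - k : ℕ) : ℚ) * ((n+1).choose k : ℚ) = ((n:ℚ)+1) * (n.choose k : ℚ) := by
  have := Nat.choose_mul_succ_eq n k
  have : (n.choose k * (n + 1) : ℕ) = ((n + 1).choose k * (n + 1 - k) : ℕ) := this
  have h := congrArg (fun x : ℕ => (x : ℚ)) this
  push_cast at h
  linarith

lemma sum_cube_ext (a N : ℕ) (h : a + 1 ≤ N) :
    ∑ k ∈ Finset.range N, ((a.choose k : ℚ))^3 = (franel a : ℚ) := by
  have : ∑ k ∈ Finset.range N, ((a.choose k : ℚ))^3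
      = ∑ k ∈ Finset.range (a+1), ((a.choose k : ℚ))^3 := by
    symm
    apply Finset.sum_subset
    · intro x hx
      simp only [Finset.mem_range] at *
      omega
    · intro x _ hnx
      simp only [Finset.mem_range] at hnx
      rw [Nat.choose_eq_zero_of_lt (by omega)]
      norm_num
  rw [this, franel]
  push_cast
  rfl

lemma cast_col (n k : ℕ) :
    ((k:ℚ)+1) * ((n+1).choose (k+1) : ℚ) = ((n:ℚ)+1) * (n.choose k : ℚ) := by
  have := Nat.add_one_mul_choose_eq n k
  have h := congrArg (fun x : ℕ => (x : ℚ)) this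
  push_cast at h
  linarith

/-- The pointwise certificate identity, valid for `k ≤ n + 2`. -/
lemma cert (n k : ℕ) (hk : k ≤ n + 2) :
    ((n:ℚ)+1)^2 * ((n:ℚ)+2)^3 *
      (((n:ℚ)+2)^2 * ((n+2).choose k : ℚ)^3
        - (7*(n:ℚ)^2+21*(n:ℚ)+16) * ((n+1).choose k : ℚ)^3
        - 8*((n:ℚ)+1)^2 * (n.choose k : ℚ)^3)
    = G n (k+1) - G n k := by
  rcases Nat.lt_or_ge k (n+1) with hkn | hkn
  · -- case k ≤ n
    have hkn' : k ≤ n := Nat.lt_succ_iff.mp hkn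
    obtain ⟨d, hd⟩ := Nat.exists_eq_add_of_le hkn'
    set c : ℚ := (n.choose k : ℚ) with hc
    set a : ℚ := ((n+1).choose k : ℚ) with ha
    set b : ℚ := ((n+2).choose k : ℚ) with hb
    set e : ℚ := ((n+2).choose (k+1) : ℚ) with he
    have h1 : ((d:ℚ)+1) * a = ((n:ℚ)+1) * c := by
      have := cast_row n k
      have hsub : n + 1 - k = d + 1 := by omega
      rw [hsub] at this
      push_cast at this
      linarith
    have h2 : ((d:ℚ)+2) * b = ((n:ℚ)+2) * a := by
      have h := cast_row (n+1) k
      rw [show n + 1 + 1 - k = d + 2 by omega] at h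
      simp only [show n + 1 + 1 = n + 2 from rfl] at h
      push_cast at h
      rw [hb, ha]
      linarith
    have h3 : ((k:ℚ)+1) * e = ((d:ℚ)+2) * b := by
      have := Nat.choose_succ_right_eq (n+2) k
      have h := congrArg (fun x : ℕ => (x : ℚ)) this
      have hsub : n + 2 - k = d + 2 := by omega
      rw [hsub] at h
      push_cast at h
      rw [he, hb]
      push_cast
      linarith
    have hd1 : ((d:ℚ)+1) ≠ 0 := by positivity
    have hd2 : ((d:ℚ)+2) ≠ 0 := by positivity
    have hk1 : ((k:ℚ)+1) ≠ 0 := by positivity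
    have haa : a = ((n:ℚ)+1) * c / ((d:ℚ)+1) := by field_simp; linarith
    have hbb : b = ((n:ℚ)+2) * a / ((d:ℚ)+2) := by field_simp; linarith
    have hee : e = ((d:ℚ)+2) * b / ((k:ℚ)+1) := by field_simp; linarith
    have hnq : (n:ℚ) = (k:ℚ) + (d:ℚ) := by exact_mod_cast congrArg (fun x : ℕ => (x:ℚ)) hd
    rw [G, G, P, P]
    rw [show ((n+2).choose (k+1) : ℚ) = e from rfl, show ((n+2).choose k : ℚ) = b from rfl]
    rw [hee, hbb, haa, hnq]
    push_cast
    field_simp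
    ring
  · -- boundary cases k = n+1 or k = n+2
    have hcases : k = n + 1 ∨ k = n + 2 := by omega
    obtain rfl | rfl := hcases
    · -- k = n + 1
      have e1 : (n.choose (n+1)) = 0 := Nat.choose_eq_zero_of_lt (by omega)
      have e2 : ((n+1).choose (n+1)) = 1 := Nat.choose_self _
      have e3 : ((n+2).choose (n+1)) = n+2 := by
        rw [show n + 2 = (n+1) + 1 from rfl, Nat.choose_succ_self_right]
      have e4 : ((n+2).choose (n+1+1)) = 1 := Nat.choose_self _
      rw [G, G, P, P, e1, e2, e3, e4]
      push_cast
      ring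
    · -- k = n + 2
      have e1 : (n.choose (n+2)) = 0 := Nat.choose_eq_zero_of_lt (by omega)
      have e2 : ((n+1).choose (n+2)) = 0 := Nat.choose_eq_zero_of_lt (by omega)
      have e3 : ((n+2).choose (n+2)) = 1 := Nat.choose_self _
      have e4 : ((n+2).choose (n+2+1)) = 0 := Nat.choose_eq_zero_of_lt (by omega)
      rw [G, G, P, P, e1, e2, e3, e4]
      push_cast
      ring

/-- The Franel recurrence. -/
lemma franel_rec (n : ℕ) :
    ((n:ℚ)+2)^2 * (franel (n+2) : ℚ)
      = (7*(n:ℚ)^2+21*(n:ℚ)+16) * (franel (n+1) : ℚ)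
        + 8*((n:ℚ)+1)^2 * (franel n : ℚ) := by
  have hf2 : (franel (n+2) : ℚ) = ∑ k ∈ range (n+3), ((n+2).choose k : ℚ)^3 :=
    (sum_cube_ext (n+2) (n+3) (by omega)).symm
  have hf1 : (franel (n+1) : ℚ) = ∑ k ∈ range (n+3), ((n+1).choose k : ℚ)^3 :=
    (sum_cube_ext (n+1) (n+3) (by omega)).symm
  have hf0 : (franel n : ℚ) = ∑ k ∈ range (n+3), (n.choose k : ℚ)^3 :=
    (sum_cube_ext n (n+3) (by omega)).symm
  have htel : ∑ k ∈ range (n+3), (G n (k+1) - G n k) = G n (n+3) - G n 0 :=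
    Finset.sum_range_sub (G n) (n+3)
  have hG0 : G n 0 = 0 := by rw [G, P]; push_cast; ring
  have hGend : G n (n+3) = 0 := by
    rw [G, Nat.choose_eq_zero_of_lt (by omega)]; push_cast; ring
  have hsum : ∑ k ∈ range (n+3),
      ((n:ℚ)+1)^2 * ((n:ℚ)+2)^3 *
      (((n:ℚ)+2)^2 * ((n+2).choose k : ℚ)^3
        - (7*(n:ℚ)^2+21*(n:ℚ)+16) * ((n+1).choose k : ℚ)^3
        - 8*((n:ℚ)+1)^2 * (n.choose k : ℚ)^3) = 0 := by
    rw [Finset.sum_congr rfl (fun k hk => cert n k (by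
      simp only [Finset.mem_range] at hk; omega))]
    rw [htel, hG0, hGend]; ring
  rw [← Finset.mul_sum, Finset.sum_sub_distrib, Finset.sum_sub_distrib,
      ← Finset.mul_sum, ← Finset.mul_sum, ← Finset.mul_sum] at hsum
  have hK : ((n:ℚ)+1)^2 * ((n:ℚ)+2)^3 ≠ 0 := by positivity
  rw [hf2, hf1, hf0]
  have := mul_eq_zero.mp hsum
  rcases this with h | h
  · exact absurd h hK
  · linarith
    [sub_eq_zero.mp (by linarith : (((n:ℚ)+2)^2 * ∑ k ∈ range (n+3), ((n+2).choose k : ℚ)^3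
      - ((7*(n:ℚ)^2+21*(n:ℚ)+16) * ∑ k ∈ range (n+3), ((n+1).choose k : ℚ)^3
        + 8*((n:ℚ)+1)^2 * ∑ k ∈ range (n+3), (n.choose k : ℚ)^3)) = 0)]

/-- Algebraic evaluation of the combinatorial sum `S`. -/
lemma S_eq (m : ℕ) :
    3 * ∑ k ∈ range (m+1),
        ((m.choose k : ℚ)^3 + (m.choose k : ℚ)^2 * (m.choose (k+1) : ℚ)
          + (m.choose k : ℚ) * (m.choose (k+1) : ℚ)^2)
      = (franel (m+1) : ℚ) + (franel m : ℚ) := by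
  have h3 : ∑ k ∈ range (m+1), (m.choose k : ℚ)^3 = (franel m : ℚ) :=
    sum_cube_ext m (m+1) (by omega)
  have h2 : ∑ k ∈ range (m+1), (m.choose (k+1) : ℚ)^3 = (franel m : ℚ) - 1 := by
    have h := Finset.sum_range_succ' (fun k => (m.choose k : ℚ)^3) (m+1)
    rw [sum_cube_ext m (m+2) (by omega)] at h
    simp only [Nat.choose_zero_right] at h
    push_cast at h
    linarith
  have h1 : (franel (m+1) : ℚ)
      = 1 + ∑ k ∈ range (m+1), ((m.choose k : ℚ) + (m.choose (k+1) : ℚ))^3 := by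
    have e : ∀ k, (((m+1).choose (k+1) : ℕ) : ℚ)^3
        = ((m.choose k : ℚ) + (m.choose (k+1) : ℚ))^3 := by
      intro k
      rw [Nat.choose_succ_succ m k]
      push_cast
      ring
    rw [franel]
    push_cast
    rw [Finset.sum_range_succ' (fun k => (((m+1).choose k : ℕ) : ℚ)^3) (m+1)]
    simp only [Nat.choose_zero_right, e]
    push_cast
    ring
  have hexp : ∑ k ∈ range (m+1),
      (3 * ((m.choose k : ℚ)^3 + (m.choose k : ℚ)^2 * (m.choose (k+1) : ℚ)
          + (m.choose k : ℚ) * (m.choose (k+1) : ℚ)^2))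
    = ∑ k ∈ range (m+1), (2 * (m.choose k : ℚ)^3)
      + (∑ k ∈ range (m+1), ((m.choose k : ℚ) + (m.choose (k+1) : ℚ))^3
        - ∑ k ∈ range (m+1), (m.choose (k+1) : ℚ)^3) := by
    rw [← Finset.sum_sub_distrib, ← Finset.sum_add_distrib]
    exact Finset.sum_congr rfl (fun k _ => by push_cast; ring)
  rw [Finset.mul_sum, hexp, ← Finset.mul_sum, h3, h2, h1]
  ring

/-- The left-hand side evaluates to `(m+1)² (f(m+1) + f m) / 3`. -/
lemma lhs_eq (m : ℕ) :
    ∑ k ∈ range (m+1), (3 * (k : ℚ) + 1) * (franel k : ℚ) * 8 ^ (m - k)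
      = ((m:ℚ)+1)^2 * ((franel (m+1) : ℚ) + (franel m : ℚ)) / 3 := by
  induction m with
  | zero => simp [franel]; norm_num [Finset.sum_range_succ]
  | succ m ih =>
    rw [Finset.sum_range_succ]
    have hstep : ∀ k ∈ range (m+1),
        (3 * (k : ℚ) + 1) * (franel k : ℚ) * 8 ^ (m + 1 - k)
          = 8 * ((3 * (k : ℚ) + 1) * (franel k : ℚ) * 8 ^ (m - k)) := by
      intro k hk
      simp only [Finset.mem_range] at hk
      have : m + 1 - k = (m - k) + 1 := by omega
      rw [this]
      ring
    rw [Finset.sum_congr rfl hstep, ← Finset.mul_sum, ih]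
    have hrec := franel_rec m
    simp only [Nat.sub_self, pow_zero, show m + 1 + 1 = m + 2 from rfl]
    push_cast
    linear_combination (-1/3 : ℚ) * hrec

end FranelAux

theorem franel_identity (n : ℕ) (hn : 0 < n) :
    ∑ k ∈ Finset.range n, (3 * (k : ℚ) + 1) * (franel k : ℚ) * 8 ^ (n - 1 - k)
      = (n : ℚ) ^ 2 * ∑ k ∈ Finset.range n, ((n - 1).choose k : ℚ) ^ 3 *
          (1 - (n : ℚ) / ((k : ℚ) + 1) + (n : ℚ) ^ 2 / ((k : ℚ) + 1) ^ 2) := by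
  obtain ⟨m, rfl⟩ : ∃ m, n = m + 1 := ⟨n - 1, by omega⟩
  have hterm : ∀ k ∈ Finset.range (m+1),
      (m.choose k : ℚ) ^ 3 *
        (1 - ((m:ℚ)+1) / ((k : ℚ) + 1) + ((m:ℚ)+1) ^ 2 / ((k : ℚ) + 1) ^ 2)
      = (m.choose k : ℚ)^3 + (m.choose k : ℚ)^2 * (m.choose (k+1) : ℚ)
          + (m.choose k : ℚ) * (m.choose (k+1) : ℚ)^2 := by
    intro k _
    set a : ℚ := (m.choose k : ℚ) with ha
    set c : ℚ := (m.choose (k+1) : ℚ) with hcc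
    have hcol := FranelAux.cast_col m k
    have hpas : ((m+1).choose (k+1) : ℚ) = a + c := by
      rw [Nat.choose_succ_succ m k]; push_cast; ring
    rw [hpas] at hcol
    have hk1 : ((k:ℚ)+1) ≠ 0 := by positivity
    have hc2 : c = ((m:ℚ)+1) * a / ((k:ℚ)+1) - a := by
      field_simp
      linarith
    rw [hc2]
    field_simp
    ring
  simp only [Nat.add_sub_cancel]
  push_cast
  rw [Finset.sum_congr rfl hterm, FranelAux.lhs_eq m]
  linear_combination (-(((m:ℚ)+1)^2)/3) * FranelAux.S_eq m
end

section
/- For every n ∈ ℕ the following polynomial identities hold: ∑_{k=0}^n (n choose k)·f_k(x) = g_n(x); f_n(x) = ∑_{k=0}^n (n choose k)·(−1)^{n−k}·g_k(x); and A_n(x) = ∑_{k=0}^n (n choose k)(n+k choose k)·f_k(x) = ∑_{k=0}^n (n choose k)(n+k choose k)·(−1)^{n−k}·g_k(x). Moreover, for every positive integer n, ∑_{k=0}^{n-1} (2k+1)·A_k(x) = (−1)^{n−1}·n·∑_{k=0}^{n-1} (n−1 choose k)(n+k choose k)·(−1)^k·g_k(x) and ∑_{k=0}^{n-1} (2k+1)·(−1)^k·A_k(x)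 = (−1)^{n−1}·n·∑_{k=0}^{n-1} (n−1 choose k)(n+k choose k)·f_k(x). -/
open Finset

/-- Trinomial revision without side condition `k ≤ n`. -/
lemma choose_mul' (n : ℕ) {k s : ℕ} (hsk : s ≤ k) :
    n.choose k * k.choose s = n.choose s * (n - s).choose (k - s) := by
  rcases le_or_gt k n with h | h
  · exact Nat.choose_mul hsk
  · rw [Nat.choose_eq_zero_of_lt h]
    rcases le_or_gt s n with h2 | h2
    · rw [Nat.choose_eq_zero_of_lt (by omega : n - s < k - s), Nat.mul_zero, Nat.zero_mul]
    · rw [Nat.choose_eq_zero_of_lt h2, Nat.zero_mul, Nat.zero_mul]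

/-- Vandermonde in `range` form. -/
lemma vander_range (a b c : ℕ) :
    ∑ t ∈ range (c + 1), a.choose t * b.choose (c - t) = (a + b).choose c := by
  rw [Nat.add_choose_eq, Finset.Nat.sum_antidiagonal_eq_sum_range_succ_mk]

/-- drop a tail of zero terms -/
lemma sum_range_drop {M : Type*} [AddCommMonoid M] (f : ℕ → M) {a b : ℕ} (hab : a ≤ b)
    (hf : ∀ i, a ≤ i → f i = 0) : ∑ i ∈ range b, f i = ∑ i ∈ range a, f i := by
  refine (Finset.sum_subset (by simpa using hab) ?_).symm
  intro x hx hx'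
  exact hf x (by simpa using hx')

/-- drop an initial segment of zero terms and shift -/
lemma sum_shift {M : Type*} [AddCommMonoid M] (f : ℕ → M) (j m : ℕ)
    (h0 : ∀ k, k < j → f k = 0) :
    ∑ k ∈ range (j + m + 1), f k = ∑ i ∈ range (m + 1), f (j + i) := by
  have h1 : ∑ k ∈ range (j + m + 1), f k = ∑ k ∈ Finset.Ico j (j + m + 1), f k := by
    rw [Finset.range_eq_Ico, ← Finset.sum_Ico_consecutive _ (Nat.zero_le j) (by omega)]
    rw [Finset.sum_eq_zero (fun x hx => h0 x (by simpa using (Finset.mem_Ico.mp hx).2)),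
      zero_add]
  rw [h1, Finset.sum_Ico_eq_sum_range]
  have h2 : j + m + 1 - j = m + 1 := by omega
  rw [h2]

lemma V2 (m j : ℕ) : ∑ i ∈ range (m + 1), m.choose i * j.choose i = (m + j).choose j := by
  have h1 : ∑ i ∈ range (j + 1), m.choose i * j.choose (j - i)
      = ∑ i ∈ range (j + 1), m.choose i * j.choose i := by
    refine Finset.sum_congr rfl fun i hi => ?_
    rw [Nat.choose_symm (by simpa using Nat.lt_succ_iff.mp (Finset.mem_range.mp hi))]
  have h2 : ∀ c : ℕ, m ≤ c → j ≤ c →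
      ∑ i ∈ range (c + 1), m.choose i * j.choose i
        = ∑ i ∈ range (m + 1), m.choose i * j.choose i := by
    intro c hm hj
    refine sum_range_drop _ (by omega) fun i hi => ?_
    rw [Nat.choose_eq_zero_of_lt (by omega), Nat.zero_mul]
  have h3 : ∑ i ∈ range (j + 1), m.choose i * j.choose i
      = ∑ i ∈ range (m + 1), m.choose i * j.choose i := by
    rw [← h2 (m + j) (by omega) (by omega)]
    refine (sum_range_drop _ (by omega) fun i hi => ?_).symm
    rw [Nat.choose_eq_zero_of_lt (show j < i by omega), Nat.mul_zero]
  rw [← h3, ← h1, vander_range]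

lemma V3 (s d e : ℕ) :
    ∑ t ∈ range (d + 1), (s + d).choose (s + t) * e.choose t = (e + (s + d)).choose d := by
  have h : ∀ t ∈ range (d + 1), (s + d).choose (s + t) * e.choose t
      = e.choose t * (s + d).choose (d - t) := by
    intro t ht
    have ht' : t ≤ d := by simpa using Nat.lt_succ_iff.mp (Finset.mem_range.mp ht)
    have : (s + d) - (s + t) = d - t := by omega
    rw [← this, Nat.choose_symm (by omega), Nat.mul_comm]
  rw [Finset.sum_congr rfl h, vander_range]

lemma W (m j s : ℕ) : ∑ i ∈ range (m + 1), m.choose i * (j.choose i * i.choose s)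
    = j.choose s * (m + j - s).choose j := by
  rcases lt_or_ge j s with hsj | hsj
  · rw [Nat.choose_eq_zero_of_lt hsj, Nat.zero_mul]
    refine Finset.sum_eq_zero fun i hi => ?_
    rcases le_or_gt i j with h | h
    · rw [Nat.choose_eq_zero_of_lt (show i < s by omega), Nat.mul_zero, Nat.mul_zero]
    · rw [Nat.choose_eq_zero_of_lt h, Nat.zero_mul, Nat.mul_zero]
  rcases lt_or_ge m s with hsm | hsm
  · have hj1 : m + j - s < j := by omega
    rw [Nat.choose_eq_zero_of_lt hj1, Nat.mul_zero]
    refine Finset.sum_eq_zero fun i hi => ?_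
    have hi' : i < s := by simp at hi; omega
    rw [Nat.choose_eq_zero_of_lt hi', Nat.mul_zero, Nat.mul_zero]
  -- main case s ≤ m, s ≤ j
  obtain ⟨d, rfl⟩ : ∃ d, m = s + d := ⟨m - s, by omega⟩
  rw [sum_shift _ s d (fun k hk => by
    rw [Nat.choose_eq_zero_of_lt hk, Nat.mul_zero, Nat.mul_zero])]
  have h : ∀ t ∈ range (d + 1), (s + d).choose (s + t) * (j.choose (s + t) * (s + t).choose s)
      = j.choose s * ((s + d).choose (s + t) * (j - s).choose t) := by
    intro t ht
    rw [choose_mul' j (Nat.le_add_right s t)]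
    have : s + t - s = t := by omega
    rw [this]; ring
  rw [Finset.sum_congr rfl h, ← Finset.mul_sum, V3]
  have h2 : (j - s + (s + d)).choose d = (s + d + j - s).choose j := by
    have e : j - s + (s + d) = s + d + j - s := by omega
    rw [e, ← Nat.choose_symm (show j ≤ s + d + j - s by omega)]
    congr 1
    omega
  rw [h2]

lemma T6 (m j : ℕ) :
    ∑ i ∈ range (m + 1), m.choose i * j.choose i * (m + 2 * j + i).choose (m + j)
    = (m + 2 * j).choose j * (m + 2 * j).choose (2 * j) := by
  have e1 : ∀ i ∈ range (m + 1), m.choose i * j.choose i * (m + 2 * j + i).choose (m + j)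
      = ∑ k ∈ range (m + j + 1),
          (m + 2 * j).choose k * (m.choose i * (j.choose i * i.choose (m + j - k))) := by
    intro i _
    rw [show (m + 2 * j + i).choose (m + j)
        = ∑ k ∈ range (m + j + 1), (m + 2 * j).choose k * i.choose (m + j - k) from
      (vander_range _ _ _).symm, Finset.mul_sum]
    refine Finset.sum_congr rfl fun k _ => by ring
  rw [Finset.sum_congr rfl e1, Finset.sum_comm]
  have e2 : ∀ k ∈ range (m + j + 1),
      ∑ i ∈ range (m + 1),
          (m + 2 * j).choose k * (m.choose i * (j.choose i * i.choose (m + j - k)))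
      = (m + 2 * j).choose k * (j.choose (m + j - k) * k.choose j) := by
    intro k hk
    have hk' : k ≤ m + j := by simpa using Nat.lt_succ_iff.mp (Finset.mem_range.mp hk)
    rw [← Finset.mul_sum, W]
    have : m + j - (m + j - k) = k := by omega
    rw [this]
  rw [Finset.sum_congr rfl e2]
  have hcomm : m + j + 1 = j + m + 1 := by omega
  rw [hcomm, sum_shift _ j m (fun k hk => by
    rw [Nat.choose_eq_zero_of_lt hk, Nat.mul_zero, Nat.mul_zero])]
  have e3 : ∀ t ∈ range (m + 1),
      (m + 2 * j).choose (j + t) * (j.choose (m + j - (j + t)) * (j + t).choose j)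
      = (m + 2 * j).choose j * ((m + j).choose t * j.choose (m - t)) := by
    intro t ht
    have h1 : (m + 2 * j).choose (j + t) * (j + t).choose j
        = (m + 2 * j).choose j * (m + j).choose t := by
      rw [choose_mul' (m + 2 * j) (Nat.le_add_right j t)]
      congr 2 <;> omega
    have h2 : m + j - (j + t) = m - t := by omega
    rw [h2]
    calc (m + 2 * j).choose (j + t) * (j.choose (m - t) * (j + t).choose j)
        = (m + 2 * j).choose (j + t) * (j + t).choose j * j.choose (m - t) := by ring
      _ = (m + 2 * j).choose j * (m + j).choose t * j.choose (m - t) := by rw [h1]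
      _ = _ := by ring
  rw [Finset.sum_congr rfl e3, ← Finset.mul_sum, vander_range]
  have h4 : (m + 2 * j).choose (2 * j) = (m + 2 * j).choose m := by
    rw [← Nat.choose_symm (show 2 * j ≤ m + 2 * j by omega)]
    congr 1
    omega
  rw [h4]
  congr 2
  omega

lemma neg_one_pow_sub {i m : ℕ} (h : i ≤ m) : (-1 : ℤ) ^ (m - i) = (-1) ^ m * (-1) ^ i := by
  obtain ⟨d, rfl⟩ : ∃ d, m = i + d := ⟨m - i, by omega⟩
  have h2 : i + d - i = d := by omega
  have h3 : ((-1 : ℤ) ^ i) * ((-1 : ℤ) ^ i) = 1 := by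
    rw [← pow_add, ← two_mul, pow_mul]; norm_num
  calc (-1 : ℤ) ^ (i + d - i) = (-1 : ℤ) ^ d := by rw [h2]
    _ = ((-1 : ℤ) ^ i * (-1 : ℤ) ^ i) * (-1) ^ d := by rw [h3, one_mul]
    _ = (-1 : ℤ) ^ (i + d) * (-1) ^ i := by rw [pow_add]; ring

/-- finite difference of a binomial coefficient -/
lemma T5 : ∀ (m n a : ℕ), m ≤ n →
    ∑ i ∈ range (m + 1), (-1 : ℤ) ^ i * m.choose i * (a + i).choose n
      = (-1) ^ m * a.choose (n - m) := by
  intro m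
  induction m with
  | zero => intro n a _; simp
  | succ m ih =>
    intro n a h
    have hB : ∑ i ∈ range (m + 1), (-1 : ℤ) ^ i * m.choose (i + 1) * (a + (i + 1)).choose n
        = (a.choose n : ℤ)
          - ∑ i ∈ range (m + 1), (-1 : ℤ) ^ i * m.choose i * (a + i).choose n := by
      have h1 := Finset.sum_range_succ'
        (fun i => (-1 : ℤ) ^ i * m.choose i * (a + i).choose n) m
      have h2 : ∑ i ∈ range (m + 1), (-1 : ℤ) ^ i * m.choose (i + 1) * (a + (i + 1)).choose n
          = ∑ i ∈ range m, (-1 : ℤ) ^ i * m.choose (i + 1) * (a + (i + 1)).choose n := by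
        rw [Finset.sum_range_succ, Nat.choose_succ_self]
        push_cast; ring
      have h3 : ∑ i ∈ range m, (-1 : ℤ) ^ (i + 1) * m.choose (i + 1) * (a + (i + 1)).choose n
          = - ∑ i ∈ range m, (-1 : ℤ) ^ i * m.choose (i + 1) * (a + (i + 1)).choose n := by
        rw [← Finset.sum_neg_distrib]
        exact Finset.sum_congr rfl fun i _ => by ring
      simp only [h3] at h1
      rw [h2]
      simp only [pow_zero, Nat.choose_zero_right, Nat.cast_one, one_mul, Nat.add_zero] at h1
      linarith [h1]
    have key : ∑ i ∈ range (m + 2), (-1 : ℤ) ^ i * (m + 1).choose i * (a + i).choose n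
        = (∑ i ∈ range (m + 1), (-1 : ℤ) ^ i * m.choose i * (a + i).choose n)
          - ∑ i ∈ range (m + 1), (-1 : ℤ) ^ i * m.choose i * (a + 1 + i).choose n := by
      rw [Finset.sum_range_succ' (fun i => (-1 : ℤ) ^ i * (m + 1).choose i * (a + i).choose n)
        (m + 1)]
      have h4 : ∑ i ∈ range (m + 1), (-1 : ℤ) ^ (i + 1) * (m + 1).choose (i + 1)
            * (a + (i + 1)).choose n
          = - (∑ i ∈ range (m + 1), (-1 : ℤ) ^ i * m.choose i * (a + 1 + i).choose n)
            - ∑ i ∈ range (m + 1), (-1 : ℤ) ^ i * m.choose (i + 1) * (a + (i + 1)).choose n := by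
        rw [← Finset.sum_neg_distrib, ← Finset.sum_sub_distrib]
        refine Finset.sum_congr rfl fun i _ => ?_
        rw [show a + 1 + i = a + (i + 1) from by omega, Nat.choose_succ_succ]
        push_cast; ring
      rw [h4, hB]
      simp only [pow_zero, Nat.choose_zero_right, Nat.cast_one, one_mul, Nat.add_zero]
      ring
    rw [key, ih n a (by omega), ih n (a + 1) (by omega)]
    have h6 : ((a + 1).choose (n - m) : ℤ) = a.choose (n - (m + 1)) + a.choose (n - m) := by
      have e1 : n - m = (n - (m + 1)) + 1 := by omega
      rw [e1, Nat.choose_succ_succ]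
      push_cast; ring
    rw [h6]; push_cast; ring

/-- alternating orthogonality -/
lemma T4 (j m : ℕ) :
    ∑ k ∈ range (j + m + 1), (((j + m).choose k : ℤ) * (-1) ^ (j + m - k)) * (k.choose j : ℤ)
      = if m = 0 then 1 else 0 := by
  rw [sum_shift _ j m (fun k hk => by
    rw [Nat.choose_eq_zero_of_lt hk]; push_cast; ring)]
  have h : ∀ i ∈ range (m + 1),
      (((j + m).choose (j + i) : ℤ) * (-1) ^ (j + m - (j + i))) * ((j + i).choose j : ℤ)
      = ((j + m).choose j : ℤ) * (-1) ^ m * ((-1) ^ i * (m.choose i : ℤ)) := by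
    intro i hi
    have hi' : i ≤ m := by simpa using Nat.lt_succ_iff.mp (Finset.mem_range.mp hi)
    have e1 : j + m - (j + i) = m - i := by omega
    have e2 : ((j + m).choose (j + i) : ℤ) * ((j + i).choose j : ℤ)
        = ((j + m).choose j : ℤ) * (m.choose i : ℤ) := by
      have := choose_mul' (j + m) (Nat.le_add_right j i)
      have e3 : j + m - j = m := by omega
      have e4 : j + i - j = i := by omega
      rw [e3, e4] at this
      exact_mod_cast congrArg (Nat.cast : ℕ → ℤ) this
    rw [e1, neg_one_pow_sub hi']
    calc (((j + m).choose (j + i) : ℤ) * ((-1) ^ m * (-1) ^ i)) * ((j + i).choose j : ℤ)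
        = (((j + m).choose (j + i) : ℤ) * ((j + i).choose j : ℤ)) * ((-1) ^ m * (-1) ^ i) := by
          ring
      _ = (((j + m).choose j : ℤ) * (m.choose i : ℤ)) * ((-1) ^ m * (-1) ^ i) := by rw [e2]
      _ = _ := by ring
  rw [Finset.sum_congr rfl h, ← Finset.mul_sum, Int.alternating_sum_range_choose]
  rcases Nat.eq_zero_or_pos m with rfl | hm
  · simp
  · rw [if_neg (show ¬ m = 0 by omega), mul_zero]

/-- scalar identity for identity 1 -/
lemma S1 (j m : ℕ) :
    ∑ k ∈ range (j + m + 1), (j + m).choose k * (k.choose j ^ 2 * (2 * j).choose k)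
      = (j + m).choose j ^ 2 * (2 * j).choose j := by
  rw [sum_shift _ j m (fun k hk => by
    rw [Nat.choose_eq_zero_of_lt hk]; ring)]
  have h : ∀ i ∈ range (m + 1),
      (j + m).choose (j + i) * ((j + i).choose j ^ 2 * (2 * j).choose (j + i))
      = ((j + m).choose j * (2 * j).choose j) * (m.choose i * j.choose i) := by
    intro i _
    have a1 := choose_mul' (j + m) (Nat.le_add_right j i)
    have a2 := choose_mul' (2 * j) (Nat.le_add_right j i)
    rw [show j + m - j = m by omega, show j + i - j = i by omega] at a1
    rw [show 2 * j - j = j by omega, show j + i - j = i by omega] at a2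
    calc (j + m).choose (j + i) * ((j + i).choose j ^ 2 * (2 * j).choose (j + i))
        = ((j + m).choose (j + i) * (j + i).choose j)
            * ((2 * j).choose (j + i) * (j + i).choose j) := by ring
      _ = ((j + m).choose j * m.choose i) * ((2 * j).choose j * j.choose i) := by
          rw [a1, a2]
      _ = _ := by ring
  rw [Finset.sum_congr rfl h, ← Finset.mul_sum, V2, Nat.add_comm m j]
  ring

/-- scalar identity for identity 3 -/
lemma S3 (j m : ℕ) :
    ∑ k ∈ range (j + m + 1),
        ((j + m).choose k * (j + m + k).choose k) * (k.choose j ^ 2 * (2 * j).choose k)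
      = (j + m).choose j ^ 2 * ((j + m + j).choose j) ^ 2 := by
  rw [sum_shift _ j m (fun k hk => by
    rw [Nat.choose_eq_zero_of_lt hk]; ring)]
  have h : ∀ i ∈ range (m + 1),
      ((j + m).choose (j + i) * (j + m + (j + i)).choose (j + i))
          * ((j + i).choose j ^ 2 * (2 * j).choose (j + i))
      = ((j + m).choose j * (2 * j).choose j)
          * (m.choose i * j.choose i * (m + 2 * j + i).choose (m + j)) := by
    intro i _
    have a1 := choose_mul' (j + m) (Nat.le_add_right j i)
    have a2 := choose_mul' (2 * j) (Nat.le_add_right j i)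
    rw [show j + m - j = m by omega, show j + i - j = i by omega] at a1
    rw [show 2 * j - j = j by omega, show j + i - j = i by omega] at a2
    have a3 : (j + m + (j + i)).choose (j + i) = (m + 2 * j + i).choose (m + j) := by
      rw [show j + m + (j + i) = m + 2 * j + i by omega,
        ← Nat.choose_symm (show m + j ≤ m + 2 * j + i by omega)]
      congr 1
      omega
    calc ((j + m).choose (j + i) * (j + m + (j + i)).choose (j + i))
          * ((j + i).choose j ^ 2 * (2 * j).choose (j + i))
        = ((j + m).choose (j + i) * (j + i).choose j)
            * ((2 * j).choose (j + i) * (j + i).choose j)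
            * (j + m + (j + i)).choose (j + i) := by ring
      _ = ((j + m).choose j * m.choose i) * ((2 * j).choose j * j.choose i)
            * (m + 2 * j + i).choose (m + j) := by rw [a1, a2, a3]
      _ = _ := by ring
  rw [Finset.sum_congr rfl h, ← Finset.mul_sum, T6]
  have a4 := choose_mul' (m + 2 * j) (show j ≤ 2 * j by omega)
  rw [show m + 2 * j - j = m + j by omega, show 2 * j - j = j by omega] at a4
  calc (j + m).choose j * (2 * j).choose j
        * ((m + 2 * j).choose j * (m + 2 * j).choose (2 * j))
      = (j + m).choose j * ((m + 2 * j).choose (2 * j) * (2 * j).choose j)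
          * (m + 2 * j).choose j := by ring
    _ = (j + m).choose j * ((m + 2 * j).choose j * (m + j).choose j)
          * (m + 2 * j).choose j := by rw [a4]
    _ = _ := by
        rw [Nat.add_comm m j, show m + 2 * j = j + m + j by omega]
        ring

/-- scalar identity for identity 4 -/
lemma S4 (j m : ℕ) :
    ∑ k ∈ range (j + m + 1),
        (((j + m).choose k : ℤ) * ((j + m + k).choose k : ℤ) * (-1) ^ (j + m - k))
          * (k.choose j : ℤ)
      = ((j + m).choose j : ℤ) * ((j + m + j).choose j : ℤ) := by
  rw [sum_shift _ j m (fun k hk => by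
    rw [Nat.choose_eq_zero_of_lt hk]; push_cast; ring)]
  have h : ∀ i ∈ range (m + 1),
      (((j + m).choose (j + i) : ℤ) * ((j + m + (j + i)).choose (j + i) : ℤ)
          * (-1) ^ (j + m - (j + i))) * ((j + i).choose j : ℤ)
      = (((j + m).choose j : ℤ) * (-1) ^ m)
          * ((-1) ^ i * (m.choose i : ℤ) * (((j + m + j) + i).choose (j + m) : ℤ)) := by
    intro i hi
    have hi' : i ≤ m := by simpa using Nat.lt_succ_iff.mp (Finset.mem_range.mp hi)
    have e1 : j + m - (j + i) = m - i := by omega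
    have a1 := choose_mul' (j + m) (Nat.le_add_right j i)
    rw [show j + m - j = m by omega, show j + i - j = i by omega] at a1
    have a1' : ((j + m).choose (j + i) : ℤ) * ((j + i).choose j : ℤ)
        = ((j + m).choose j : ℤ) * (m.choose i : ℤ) := by exact_mod_cast a1
    have a3 : (j + m + (j + i)).choose (j + i) = ((j + m + j) + i).choose (j + m) := by
      rw [show j + m + (j + i) = (j + m + j) + i by omega,
        ← Nat.choose_symm (show j + m ≤ j + m + j + i by omega)]
      congr 1
      omega
    rw [e1, neg_one_pow_sub hi', a3]
    calc (((j + m).choose (j + i) : ℤ) * (((j + m + j) + i).choose (j + m) : ℤ)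
            * ((-1) ^ m * (-1) ^ i)) * ((j + i).choose j : ℤ)
        = (((j + m).choose (j + i) : ℤ) * ((j + i).choose j : ℤ))
            * (((j + m + j) + i).choose (j + m) : ℤ) * ((-1) ^ m * (-1) ^ i) := by ring
      _ = (((j + m).choose j : ℤ) * (m.choose i : ℤ))
            * (((j + m + j) + i).choose (j + m) : ℤ) * ((-1) ^ m * (-1) ^ i) := by rw [a1']
      _ = _ := by ring
  rw [Finset.sum_congr rfl h, ← Finset.mul_sum]
  have hT5 := T5 m (j + m) (j + m + j) (by omega)
  have e2 : j + m - m = j := by omega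
  rw [e2] at hT5
  have e3 : ∑ i ∈ range (m + 1),
      (-1 : ℤ) ^ i * (m.choose i : ℤ) * (((j + m + j) + i).choose (j + m) : ℤ)
      = (-1) ^ m * ((j + m + j).choose j : ℤ) := hT5
  rw [e3]
  have h3 : ((-1 : ℤ) ^ m) * ((-1 : ℤ) ^ m) = 1 := by
    rw [← pow_add, ← two_mul, pow_mul]; norm_num
  calc ((j + m).choose j : ℤ) * (-1) ^ m * ((-1) ^ m * ((j + m + j).choose j : ℤ))
      = ((-1 : ℤ) ^ m * (-1 : ℤ) ^ m) * (((j + m).choose j : ℤ)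
          * ((j + m + j).choose j : ℤ)) := by ring
    _ = _ := by rw [h3]; ring

/-- telescoping scalar identity for identities 5 and 6 -/
lemma S5 (j : ℕ) : ∀ n : ℕ,
    ∑ k ∈ range n, (2 * (k : ℤ) + 1) * ((-1) ^ k * ((k.choose j : ℤ) * ((k + j).choose j : ℤ)))
      = (-1) ^ (n - 1) * (n : ℤ) * (((n - 1).choose j : ℤ) * ((n + j).choose j : ℤ)) := by
  intro n
  induction n with
  | zero => simp
  | succ n ih =>
    rw [Finset.sum_range_succ, ih]
    have fA : (n : ℤ) * ((n - 1).choose j : ℤ) * (-1) ^ (n - 1)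
        = ((n : ℤ) - j) * (n.choose j : ℤ) * (-(-1) ^ n) := by
      rcases Nat.eq_zero_or_pos n with rfl | hn
      · rcases Nat.eq_zero_or_pos j with rfl | hj
        · simp
        · simp [Nat.choose_eq_zero_of_lt hj]
      rcases le_or_gt j n with h | h
      · have hA := Nat.choose_mul_succ_eq (n - 1) j
        rw [show n - 1 + 1 = n by omega] at hA
        have hA' : ((n - 1).choose j : ℤ) * n = (n.choose j : ℤ) * ((n : ℤ) - j) := by
          rw [show ((n:ℤ) - j) = ((n - j : ℕ) : ℤ) by push_cast [Nat.cast_sub h]; ring]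
          exact_mod_cast hA
        have hsgn : (-1 : ℤ) ^ (n - 1) = -(-1) ^ n := by
          have : (-1 : ℤ) ^ (n - 1) * (-1) = (-1) ^ n := by
            rw [← pow_succ]; congr 1; omega
          linarith [this]
        rw [hsgn]
        calc (n : ℤ) * ((n - 1).choose j : ℤ) * (-(-1) ^ n)
            = ((n - 1).choose j : ℤ) * n * (-(-1) ^ n) := by ring
          _ = (n.choose j : ℤ) * ((n : ℤ) - j) * (-(-1) ^ n) := by rw [hA']
          _ = _ := by ring
      · rw [Nat.choose_eq_zero_of_lt h, Nat.choose_eq_zero_of_lt (show n - 1 < j by omega)]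
        push_cast; ring
    have fB : ((n : ℤ) + 1) * ((n + 1 + j).choose j : ℤ)
        = ((n : ℤ) + j + 1) * ((n + j).choose j : ℤ) := by
      have hB := Nat.add_one_mul_choose_eq (n + j) n
      have e1 : (n + j).choose n = (n + j).choose j := by
        rw [← Nat.choose_symm (Nat.le_add_right n j)]
        congr 1
        omega
      have e2 : (n + j + 1).choose (n + 1) = (n + 1 + j).choose j := by
        rw [show n + j + 1 = n + 1 + j by omega,
          ← Nat.choose_symm (show j ≤ n + 1 + j by omega)]
        congr 1
        omega
      rw [e1, e2] at hB
      have : ((n : ℤ) + j + 1) * ((n + j).choose j : ℤ)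
          = ((n + 1 + j).choose j : ℤ) * ((n : ℤ) + 1) := by exact_mod_cast hB
      linarith [this]
    have hcast : ((n + 1 : ℕ) : ℤ) = (n : ℤ) + 1 := by push_cast; ring
    rw [show n + 1 - 1 = n from rfl]
    push_cast
    linear_combination ((n + j : ℕ).choose j : ℤ) * fA - ((-1 : ℤ) ^ n * (n.choose j : ℤ)) * fB

open Polynomial in
/-- generic double-sum exchange for polynomial combinations -/
lemma key_swap (N : ℕ) (a : ℕ → ℤ) (b : ℕ → ℕ → ℤ) (P : ℕ → Polynomial ℤ)
    (hb : ∀ k j, k < j → b k j = 0) :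
    ∑ k ∈ range N, C (a k) * ∑ j ∈ range (k + 1), C (b k j) * P j
      = ∑ j ∈ range N, C (∑ k ∈ range N, a k * b k j) * P j := by
  have h1 : ∀ k ∈ range N, C (a k) * ∑ j ∈ range (k + 1), C (b k j) * P j
      = ∑ j ∈ range N, C (a k * b k j) * P j := by
    intro k hk
    rw [Finset.mul_sum]
    have h2 : ∀ j ∈ range (k + 1), C (a k) * (C (b k j) * P j) = C (a k * b k j) * P j := by
      intro j _
      rw [← mul_assoc, ← C_mul]
    rw [Finset.sum_congr rfl h2]
    refine Finset.sum_subset (fun x hx => ?_) (fun j hj hj' => ?_)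
    · simp only [Finset.mem_range] at hk hx ⊢
      omega
    · have : k < j := by
        simp only [Finset.mem_range] at hj hj'
        omega
      rw [hb k j this, mul_zero, map_zero, zero_mul]
  rw [Finset.sum_congr rfl h1, Finset.sum_comm]
  exact Finset.sum_congr rfl fun j _ => by rw [map_sum, Finset.sum_mul]
open Polynomial

/-- `g_n(x) = ∑_{k=0}^n (n choose k)² (2k choose k) xᵏ` as an integer polynomial. -/
noncomputable def gP (n : ℕ) : ℤ[X] :=
  ∑ k ∈ Finset.range (n + 1), C ((n.choose k : ℤ) ^ 2 * ((2 * k).choose k : ℤ)) * X ^ k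

/-- The Franel polynomial `f_n(x) = ∑_{k=0}^n (n choose k)² (2k choose n) xᵏ`. -/
noncomputable def fP (n : ℕ) : ℤ[X] :=
  ∑ k ∈ Finset.range (n + 1), C ((n.choose k : ℤ) ^ 2 * ((2 * k).choose n : ℤ)) * X ^ k

/-- The Apéry polynomial `A_n(x) = ∑_{k=0}^n (n choose k)² (n+k choose k)² xᵏ`. -/
noncomputable def AP (n : ℕ) : ℤ[X] :=
  ∑ k ∈ Finset.range (n + 1), C ((n.choose k : ℤ) ^ 2 * ((n + k).choose k : ℤ) ^ 2) * X ^ k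

lemma part1 (n : ℕ) : ∑ k ∈ Finset.range (n + 1), C (n.choose k : ℤ) * fP k = gP n := by
  simp only [fP, gP]
  rw [key_swap (n + 1) (fun k => (n.choose k : ℤ))
    (fun k j => (k.choose j : ℤ) ^ 2 * ((2 * j).choose k : ℤ)) (fun j => X ^ j)
    (fun k j h => by simp [Nat.choose_eq_zero_of_lt h])]
  refine Finset.sum_congr rfl fun j hj => ?_
  congr 1
  apply congrArg
  obtain ⟨m, rfl⟩ : ∃ m, n = j + m :=
    ⟨n - j, by have := Finset.mem_range.mp hj; omega⟩
  exact_mod_cast S1 j m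

lemma part2 (n : ℕ) : fP n = ∑ k ∈ Finset.range (n + 1),
    C ((n.choose k : ℤ) * (-1 : ℤ) ^ (n - k)) * gP k := by
  have h1 : ∑ k ∈ Finset.range (n + 1), C ((n.choose k : ℤ) * (-1 : ℤ) ^ (n - k)) * gP k
      = ∑ k ∈ Finset.range (n + 1), C ((n.choose k : ℤ) * (-1 : ℤ) ^ (n - k))
          * ∑ j ∈ Finset.range (k + 1), C (k.choose j : ℤ) * fP j :=
    Finset.sum_congr rfl fun k _ => by rw [part1 k]
  rw [h1, key_swap (n + 1) (fun k => (n.choose k : ℤ) * (-1 : ℤ) ^ (n - k))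
    (fun k j => (k.choose j : ℤ)) fP
    (fun k j h => by simp [Nat.choose_eq_zero_of_lt h])]
  have h2 : ∀ j ∈ Finset.range (n + 1),
      C (∑ k ∈ Finset.range (n + 1),
          ((n.choose k : ℤ) * (-1 : ℤ) ^ (n - k)) * (k.choose j : ℤ)) * fP j
      = if j = n then fP j else 0 := by
    intro j hj
    obtain ⟨m, rfl⟩ : ∃ m, n = j + m :=
      ⟨n - j, by have := Finset.mem_range.mp hj; omega⟩
    rw [T4 j m]
    rcases Nat.eq_zero_or_pos m with rfl | hm
    · simp
    · rw [if_neg (show ¬ m = 0 by omega), if_neg (show ¬ j = j + m by omega),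
        map_zero, zero_mul]
  rw [Finset.sum_congr rfl h2, Finset.sum_ite_eq' (Finset.range (n + 1)) n fP,
    if_pos (by simp)]

lemma part3 (n : ℕ) : AP n = ∑ k ∈ Finset.range (n + 1),
    C ((n.choose k : ℤ) * ((n + k).choose k : ℤ)) * fP k := by
  simp only [fP, AP]
  rw [key_swap (n + 1) (fun k => (n.choose k : ℤ) * ((n + k).choose k : ℤ))
    (fun k j => (k.choose j : ℤ) ^ 2 * ((2 * j).choose k : ℤ)) (fun j => X ^ j)
    (fun k j h => by simp [Nat.choose_eq_zero_of_lt h])]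
  refine (Finset.sum_congr rfl fun j hj => ?_).symm
  congr 1
  apply congrArg
  obtain ⟨m, rfl⟩ : ∃ m, n = j + m :=
    ⟨n - j, by have := Finset.mem_range.mp hj; omega⟩
  exact_mod_cast S3 j m

lemma part4 (n : ℕ) : AP n = ∑ k ∈ Finset.range (n + 1),
    C ((n.choose k : ℤ) * ((n + k).choose k : ℤ) * (-1 : ℤ) ^ (n - k)) * gP k := by
  have h1 : ∑ k ∈ Finset.range (n + 1),
        C ((n.choose k : ℤ) * ((n + k).choose k : ℤ) * (-1 : ℤ) ^ (n - k)) * gP k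
      = ∑ k ∈ Finset.range (n + 1),
          C ((n.choose k : ℤ) * ((n + k).choose k : ℤ) * (-1 : ℤ) ^ (n - k))
            * ∑ j ∈ Finset.range (k + 1), C (k.choose j : ℤ) * fP j :=
    Finset.sum_congr rfl fun k _ => by rw [part1 k]
  rw [h1, key_swap (n + 1)
    (fun k => (n.choose k : ℤ) * ((n + k).choose k : ℤ) * (-1 : ℤ) ^ (n - k))
    (fun k j => (k.choose j : ℤ)) fP
    (fun k j h => by simp [Nat.choose_eq_zero_of_lt h]), part3 n]
  refine Finset.sum_congr rfl fun j hj => ?_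
  congr 1
  apply congrArg
  obtain ⟨m, rfl⟩ : ∃ m, n = j + m :=
    ⟨n - j, by have := Finset.mem_range.mp hj; omega⟩
  exact (S4 j m).symm

lemma part5 (n : ℕ) (hn : 0 < n) : ∑ k ∈ Finset.range n, C (2 * (k : ℤ) + 1) * AP k
    = C ((-1 : ℤ) ^ (n - 1) * (n : ℤ)) * ∑ k ∈ Finset.range n,
        C (((n - 1).choose k : ℤ) * ((n + k).choose k : ℤ) * (-1 : ℤ) ^ k) * gP k := by
  have h1 : ∑ k ∈ Finset.range n, C (2 * (k : ℤ) + 1) * AP k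
      = ∑ k ∈ Finset.range n, C (2 * (k : ℤ) + 1)
          * ∑ j ∈ Finset.range (k + 1),
              C ((k.choose j : ℤ) * ((k + j).choose j : ℤ) * (-1 : ℤ) ^ (k - j)) * gP j :=
    Finset.sum_congr rfl fun k _ => by rw [← part4 k]
  rw [h1, key_swap n (fun k => 2 * (k : ℤ) + 1)
    (fun k j => (k.choose j : ℤ) * ((k + j).choose j : ℤ) * (-1 : ℤ) ^ (k - j)) gP
    (fun k j h => by simp [Nat.choose_eq_zero_of_lt h]), Finset.mul_sum]
  refine Finset.sum_congr rfl fun j hj => ?_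
  rw [← mul_assoc, ← C_mul]
  congr 1
  have h2 : ∀ k ∈ Finset.range n,
      (2 * (k : ℤ) + 1) * ((k.choose j : ℤ) * ((k + j).choose j : ℤ) * (-1 : ℤ) ^ (k - j))
      = (-1 : ℤ) ^ j * ((2 * (k : ℤ) + 1)
          * ((-1) ^ k * ((k.choose j : ℤ) * ((k + j).choose j : ℤ)))) := by
    intro k _
    rcases lt_or_ge k j with h | h
    · rw [Nat.choose_eq_zero_of_lt h]; push_cast; ring
    · rw [neg_one_pow_sub h]
      have h3 : ((-1 : ℤ) ^ j) * ((-1 : ℤ) ^ j) = 1 := by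
        rw [← pow_add, ← two_mul, pow_mul]; norm_num
      calc (2 * (k : ℤ) + 1) * ((k.choose j : ℤ) * ((k + j).choose j : ℤ)
              * ((-1 : ℤ) ^ k * (-1) ^ j))
          = 1 * ((2 * (k : ℤ) + 1) * ((k.choose j : ℤ) * ((k + j).choose j : ℤ)
              * ((-1 : ℤ) ^ k * (-1) ^ j))) := by ring
        _ = ((-1 : ℤ) ^ j * (-1 : ℤ) ^ j) * ((2 * (k : ℤ) + 1) * ((k.choose j : ℤ)
              * ((k + j).choose j : ℤ) * ((-1 : ℤ) ^ k * (-1) ^ j))) := by rw [h3]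
        _ = (-1 : ℤ) ^ j * ((2 * (k : ℤ) + 1)
              * ((-1) ^ k * ((k.choose j : ℤ) * ((k + j).choose j : ℤ)))) * (((-1 : ℤ) ^ j)
              * ((-1 : ℤ) ^ j)) := by ring
        _ = _ := by rw [h3, mul_one]
  rw [Finset.sum_congr rfl h2, ← Finset.mul_sum, S5 j n]
  ring

lemma part6 (n : ℕ) (hn : 0 < n) :
    ∑ k ∈ Finset.range n, C ((2 * (k : ℤ) + 1) * (-1 : ℤ) ^ k) * AP k
    = C ((-1 : ℤ) ^ (n - 1) * (n : ℤ)) * ∑ k ∈ Finset.range n,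
        C (((n - 1).choose k : ℤ) * ((n + k).choose k : ℤ)) * fP k := by
  have h1 : ∑ k ∈ Finset.range n, C ((2 * (k : ℤ) + 1) * (-1 : ℤ) ^ k) * AP k
      = ∑ k ∈ Finset.range n, C ((2 * (k : ℤ) + 1) * (-1 : ℤ) ^ k)
          * ∑ j ∈ Finset.range (k + 1),
              C ((k.choose j : ℤ) * ((k + j).choose j : ℤ)) * fP j :=
    Finset.sum_congr rfl fun k _ => by rw [← part3 k]
  rw [h1, key_swap n (fun k => (2 * (k : ℤ) + 1) * (-1 : ℤ) ^ k)
    (fun k j => (k.choose j : ℤ) * ((k + j).choose j : ℤ)) fP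
    (fun k j h => by simp [Nat.choose_eq_zero_of_lt h]), Finset.mul_sum]
  refine Finset.sum_congr rfl fun j hj => ?_
  rw [← mul_assoc, ← C_mul]
  congr 1
  have h2 : ∀ k ∈ Finset.range n,
      ((2 * (k : ℤ) + 1) * (-1 : ℤ) ^ k) * ((k.choose j : ℤ) * ((k + j).choose j : ℤ))
      = (2 * (k : ℤ) + 1) * ((-1) ^ k * ((k.choose j : ℤ) * ((k + j).choose j : ℤ))) :=
    fun k _ => by ring
  rw [Finset.sum_congr rfl h2, S5 j n]

theorem apery_franel_g_identities :
    (∀ n : ℕ, ∑ k ∈ Finset.range (n + 1), C (n.choose k : ℤ) * fP k = gP n)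
    ∧ (∀ n : ℕ, fP n = ∑ k ∈ Finset.range (n + 1),
        C ((n.choose k : ℤ) * (-1 : ℤ) ^ (n - k)) * gP k)
    ∧ (∀ n : ℕ, AP n = ∑ k ∈ Finset.range (n + 1),
        C ((n.choose k : ℤ) * ((n + k).choose k : ℤ)) * fP k)
    ∧ (∀ n : ℕ, AP n = ∑ k ∈ Finset.range (n + 1),
        C ((n.choose k : ℤ) * ((n + k).choose k : ℤ) * (-1 : ℤ) ^ (n - k)) * gP k)
    ∧ (∀ n : ℕ, 0 < n → ∑ k ∈ Finset.range n, C (2 * (k : ℤ) + 1) * AP k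
        = C ((-1 : ℤ) ^ (n - 1) * (n : ℤ)) * ∑ k ∈ Finset.range n,
            C (((n - 1).choose k : ℤ) * ((n + k).choose k : ℤ) * (-1 : ℤ) ^ k) * gP k)
    ∧ (∀ n : ℕ, 0 < n → ∑ k ∈ Finset.range n, C ((2 * (k : ℤ) + 1) * (-1 : ℤ) ^ k) * AP k
        = C ((-1 : ℤ) ^ (n - 1) * (n : ℤ)) * ∑ k ∈ Finset.range n,
            C (((n - 1).choose k : ℤ) * ((n + k).choose k : ℤ)) * fP k) :=
  ⟨part1, part2, part3, part4, part5, part6⟩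
end

section
/- In the field ℚ(q) of rational functions, for every n ∈ ℕ and every x ∈ ℚ(q): A_n(x;q) = ∑_{k=0}^n (−1)^{n−k}·q^{(n−k)(5n+3k+1)/2}·[n choose k]_q·[n+k choose k]_q·g_k(x;q). -/
open Finset


/-- The q-integer `[m]_q = (1 - q^m)/(1 - q)` in `ℚ(q)`. -/
noncomputable def qint (m : ℕ) : RatFunc ℚ := (1 - RatFunc.X ^ m) / (1 - RatFunc.X)

/-- The Gaussian binomial coefficient `[n choose k]_q = ∏_{j=1}^k [n-j+1]_q/[j]_q`. -/
noncomputable def qbinom (n k : ℕ) : RatFunc ℚ :=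
  ∏ j ∈ Finset.range k, qint (n - j) / qint (j + 1)

/-- `A_n(x; q) = ∑_{k=0}^n q^{2n(n-k)} [n choose k]_q² [n+k choose k]_q² xᵏ`. -/
noncomputable def Aq (x : RatFunc ℚ) (n : ℕ) : RatFunc ℚ :=
  ∑ k ∈ Finset.range (n + 1),
    RatFunc.X ^ (2 * n * (n - k)) * qbinom n k ^ 2 * qbinom (n + k) k ^ 2 * x ^ k

/-- `g_n(x; q) = ∑_{k=0}^n q^{2n(n-k)} [n choose k]_q² [2k choose k]_q xᵏ`. -/
noncomputable def gq (x : RatFunc ℚ) (n : ℕ) : RatFunc ℚ :=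
  ∑ k ∈ Finset.range (n + 1),
    RatFunc.X ^ (2 * n * (n - k)) * qbinom n k ^ 2 * qbinom (2 * k) k * x ^ k

namespace QAux

local notation "K" => RatFunc ℚ
local notation "q" => (RatFunc.X : RatFunc ℚ)

noncomputable def P (m : ℕ) : K := 1 - q ^ m

noncomputable def D (n : ℕ) : K := ∏ j ∈ range n, P (j + 1)

noncomputable def poch (B : K) (i : ℕ) : K := ∏ t ∈ range i, (1 - B * q ^ t)

lemma P_ne (m : ℕ) (hm : m ≠ 0) : P m ≠ 0 := by
  have : (1 - Polynomial.X ^ m : Polynomial ℚ) ≠ 0 := by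
    intro h
    have := congrArg (Polynomial.eval 0) h
    simp [Polynomial.eval_pow, zero_pow hm] at this
  have hmap : P m = algebraMap (Polynomial ℚ) K (1 - Polynomial.X ^ m) := by
    simp [P, map_sub, map_pow, RatFunc.algebraMap_X]
  rw [hmap]
  exact fun h => this (RatFunc.algebraMap_injective ℚ (by simpa using h))

lemma D_ne (n : ℕ) : D n ≠ 0 :=
  Finset.prod_ne_zero_iff.mpr fun j _ => P_ne (j + 1) (by omega)

lemma D_succ (n : ℕ) : D (n + 1) = D n * P (n + 1) := Finset.prod_range_succ _ n

lemma qint_eq (m : ℕ) : qint m = P m / P 1 := by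
  simp [qint, P, pow_one]

lemma qint_zero : qint 0 = 0 := by simp [qint]

lemma qbinom_zero_of_lt {n k : ℕ} (h : n < k) : qbinom n k = 0 := by
  apply Finset.prod_eq_zero (Finset.mem_range.mpr h)
  simp [qint_zero]

lemma qbinom_eq {n k : ℕ} (h : k ≤ n) : qbinom n k = D n / (D k * D (n - k)) := by
  induction k with
  | zero =>
    have hD0 : D 0 = 1 := rfl
    rw [qbinom, Finset.range_zero, Finset.prod_empty, Nat.sub_zero, hD0, one_mul, div_self (D_ne n)]
  | succ k ih =>
    have hk : k ≤ n := by omega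
    rw [qbinom, Finset.prod_range_succ, ← qbinom, ih hk]
    have h1 : qint (n - k) / qint (k + 1) = P (n - k) / P (k + 1) := by
      rw [qint_eq, qint_eq, div_div_div_cancel_right₀]
      exact P_ne 1 one_ne_zero
    rw [h1]
    have h2 : n - k = (n - (k + 1)) + 1 := by omega
    have h3 : D (n - k) = D (n - (k+1)) * P (n - k) := by
      rw [h2, D_succ, ← h2]
    rw [D_succ, h3]
    have hP1 : P (n - k) ≠ 0 := P_ne _ (by omega)
    have hP2 : P (k + 1) ≠ 0 := P_ne _ (by omega)
    field_simp


lemma poch_succ (B : K) (k : ℕ) : poch B (k + 1) = poch B k * (1 - B * q ^ k) :=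
  Finset.prod_range_succ _ k

lemma poch_succ' (B : K) (k : ℕ) : poch B (k + 1) = (1 - B) * poch (B * q) k := by
  rw [poch, Finset.prod_range_succ']
  rw [mul_comm]
  congr 1
  · simp
  · apply Finset.prod_congr rfl
    intro t _
    rw [pow_succ]
    ring_nf

lemma pochD (a k : ℕ) : D (a + k) = D a * poch (q ^ (a + 1)) k := by
  induction k with
  | zero => simp [poch]
  | succ k ih =>
    rw [show a + (k+1) = (a+k)+1 from rfl, D_succ, ih, poch_succ, mul_assoc]
    congr 2
    rw [P, ← pow_add]
    congr 2
    omega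

lemma pochD_div (a k : ℕ) : poch (q ^ (a + 1)) k = D (a + k) / D a := by
  rw [pochD, mul_div_cancel_left₀ _ (D_ne a)]

/-- triangular number helper -/
lemma tri_succ (i : ℕ) : (i + 1) * ((i + 1) - 1) / 2 = i * (i - 1) / 2 + i := by
  cases i with
  | zero => rfl
  | succ u =>
    rw [Nat.add_sub_cancel, Nat.add_sub_cancel]
    have e1 : (u + 1 + 1) * (u + 1) = (u + 1) * u + (u + 1) * 2 := by ring
    rw [e1, Nat.add_mul_div_right _ _ (by norm_num : (0:ℕ) < 2)]

noncomputable def sS (m i : ℕ) (B C : K) : K :=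
  (-1) ^ i * q ^ (i * (i - 1) / 2) * qbinom m i * poch B i * poch (C * q ^ i) (m - i)
    * C ^ i * B ^ (m - i)

lemma sS_zero_of_lt {m i : ℕ} (h : m < i) (B C : K) : sS m i B C = 0 := by
  simp [sS, qbinom_zero_of_lt h]


lemma cert (m i : ℕ) (him : i ≤ m + 1) (B C : K) :
    (1 - q ^ (m+1)) * sS (m+1) i B C - (1 - q ^ (m+1)) * (B - C) * sS m i B (q * C)
      = (q ^ (i+1) - 1) * sS (m+1) (i+1) B C - (q ^ i - 1) * sS (m+1) i B C := by
  rcases Nat.lt_or_ge i (m+1) with hi | hi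
  · -- i ≤ m
    obtain ⟨a, rfl⟩ : ∃ a, m = i + a := ⟨m - i, by omega⟩
    simp only [sS]
    rw [qbinom_eq (show i ≤ i + a + 1 by omega), qbinom_eq (show i ≤ i + a by omega),
        qbinom_eq (show i + 1 ≤ i + a + 1 by omega), tri_succ]
    simp only [show i + a + 1 - i = a + 1 from by omega, show i + a - i = a from by omega,
        show i + a + 1 - (i + 1) = a from by omega]
    rw [poch_succ' (C * q ^ i) a, poch_succ B i]
    have e1 : (q * C) * q ^ i = C * q ^ i * q := by ring
    have e2 : C * q ^ (i+1) = C * q ^ i * q := by rw [pow_succ]; ring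
    rw [e1, e2, D_succ (i + a), D_succ a, D_succ i]
    have hPa : P (a + 1) ≠ 0 := P_ne _ (by omega)
    have hPi : P (i + 1) ≠ 0 := P_ne _ (by omega)
    have hgoal1 : (1 - q ^ (i + a + 1) : K) = P (i + a + 1) := rfl
    rw [hgoal1]
    field_simp [D_ne i, D_ne a, hPa, hPi]
    simp only [P, pow_add]
    ring
  · -- i = m + 1
    have : i = m + 1 := by omega
    subst this
    rw [sS_zero_of_lt (show m < m + 1 by omega), sS_zero_of_lt (show m + 1 < m + 1 + 1 by omega)]
    ring


lemma star (m : ℕ) (B C : K) :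
    ∑ i ∈ range (m + 1), sS m i B C = ∏ t ∈ range m, (B - C * q ^ t) := by
  induction m generalizing B C with
  | zero => simp [sS, qbinom, poch]
  | succ m ih =>
    have h1 : ∑ i ∈ range (m + 2),
        ((1 - q ^ (m+1)) * sS (m+1) i B C - (1 - q ^ (m+1)) * (B - C) * sS m i B (q * C))
        = ∑ i ∈ range (m + 2),
        ((q ^ (i+1) - 1) * sS (m+1) (i+1) B C - (q ^ i - 1) * sS (m+1) i B C) :=
      Finset.sum_congr rfl fun i hi => cert m i (by simpa using Nat.lt_succ_iff.mp (mem_range.mp hi)) B C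
    have h2 : ∑ i ∈ range (m + 2),
        ((q ^ (i+1) - 1) * sS (m+1) (i+1) B C - (q ^ i - 1) * sS (m+1) i B C) = 0 := by
      rw [Finset.sum_range_sub (fun i => (q ^ i - 1) * sS (m+1) i B C) (m+2)]
      rw [sS_zero_of_lt (by omega)]
      simp
    have h3 : ∑ i ∈ range (m + 2),
        ((1 - q ^ (m+1)) * sS (m+1) i B C - (1 - q ^ (m+1)) * (B - C) * sS m i B (q * C))
        = (1 - q ^ (m+1)) * (∑ i ∈ range (m + 2), sS (m+1) i B C)
          - (1 - q ^ (m+1)) * (B - C) * (∑ i ∈ range (m + 2), sS m i B (q * C)) := by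
      rw [Finset.sum_sub_distrib, ← Finset.mul_sum, ← Finset.mul_sum]
    have h4 : ∑ i ∈ range (m + 2), sS m i B (q * C)
        = ∏ t ∈ range m, (B - (q * C) * q ^ t) := by
      rw [Finset.sum_range_succ, sS_zero_of_lt (by omega), add_zero, ih]
    have hP : (1 - q ^ (m+1) : K) ≠ 0 := P_ne (m+1) (by omega)
    have h5 : (1 - q ^ (m+1)) * (∑ i ∈ range (m + 2), sS (m+1) i B C)
        = (1 - q ^ (m+1)) * ((B - C) * ∏ t ∈ range m, (B - (q * C) * q ^ t)) := by
      rw [h3, h4] at h1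
      rw [h2] at h1
      linear_combination h1
    have h6 := mul_left_cancel₀ hP h5
    rw [h6, Finset.prod_range_succ']
    simp only [pow_zero, mul_one]
    rw [mul_comm]
    congr 1
    apply Finset.prod_congr rfl
    intro t _
    rw [pow_succ]
    ring


lemma tri2 (t : ℕ) : 2 * (t * (t - 1) / 2) + t = t * t := by
  cases t with
  | zero => rfl
  | succ u =>
    rw [Nat.add_sub_cancel]
    have h : 2 ∣ (u + 1) * u := by
      rcases Nat.even_or_odd u with ⟨v, rfl⟩ | ⟨v, rfl⟩
      · exact ⟨(v + v + 1) * v, by ring⟩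
      · exact ⟨(v + 1) * (2 * v + 1), by ring⟩
    rw [Nat.mul_div_cancel' h]
    ring

lemma exp' (a i j : ℕ) :
    a * (5 * (j + (i + a)) + 3 * (j + i) + 1) / 2 + 2 * (j + i) * i
      = ((i + a) * ((i + a) - 1) / 2 + (i + a) * ((i + a) + 2 * j))
        + (i * (i - 1) / 2 + (i + (i + a + 2 * j + 1) * a)) := by
  have hA : 2 ∣ a * (5 * (j + (i + a)) + 3 * (j + i) + 1) := by
    rcases Nat.even_or_odd a with ⟨v, rfl⟩ | ⟨v, rfl⟩
    · exact ⟨v * (5 * (j + (i + (v + v))) + 3 * (j + i) + 1), by ring⟩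
    · exact ⟨(2 * v + 1) * (4 * j + 4 * i + 5 * v + 3), by ring⟩
  have t1 := tri2 (i + a)
  have t2 := tri2 i
  have hcan : 2 * (a * (5 * (j + (i + a)) + 3 * (j + i) + 1) / 2)
      = a * (5 * (j + (i + a)) + 3 * (j + i) + 1) := Nat.mul_div_cancel' hA
  have main : 2 * (a * (5 * (j + (i + a)) + 3 * (j + i) + 1) / 2 + 2 * (j + i) * i) + ((i + a) + i)
      = 2 * (((i + a) * ((i + a) - 1) / 2 + (i + a) * ((i + a) + 2 * j))
        + (i * (i - 1) / 2 + (i + (i + a + 2 * j + 1) * a))) + ((i + a) + i) := by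
    have eL : 2 * (a * (5 * (j + (i + a)) + 3 * (j + i) + 1) / 2 + 2 * (j + i) * i) + ((i + a) + i)
        = 2 * (a * (5 * (j + (i + a)) + 3 * (j + i) + 1) / 2) + (4 * (j + i) * i + (i + a) + i) := by
      ring
    have eR : 2 * (((i + a) * ((i + a) - 1) / 2 + (i + a) * ((i + a) + 2 * j))
          + (i * (i - 1) / 2 + (i + (i + a + 2 * j + 1) * a))) + ((i + a) + i)
        = (2 * ((i + a) * ((i + a) - 1) / 2) + (i + a)) + (2 * (i * (i - 1) / 2) + i)
          + (2 * (i + a) * ((i + a) + 2 * j) + 2 * (i + (i + a + 2 * j + 1) * a)) := by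
      ring
    rw [eL, eR, hcan, t1, t2]
    ring
  exact Nat.eq_of_mul_eq_mul_left (by norm_num) (Nat.add_right_cancel main)

lemma exp2 (j m : ℕ) :
    (m * (m - 1) / 2 + m * (m + 2 * j)) + m * (m + 1) / 2 = 2 * (j + m) * m := by
  have t1 := tri2 m
  have h : 2 ∣ m * (m + 1) := by
    rcases Nat.even_or_odd m with ⟨v, rfl⟩ | ⟨v, rfl⟩
    · exact ⟨v * (v + v + 1), by ring⟩
    · exact ⟨(2 * v + 1) * (v + 1), by ring⟩
  have hcan : 2 * (m * (m + 1) / 2) = m * (m + 1) := Nat.mul_div_cancel' h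
  have main : 2 * ((m * (m - 1) / 2 + m * (m + 2 * j)) + m * (m + 1) / 2) + m
      = 2 * (2 * (j + m) * m) + m := by
    have eL : 2 * ((m * (m - 1) / 2 + m * (m + 2 * j)) + m * (m + 1) / 2) + m
        = (2 * (m * (m - 1) / 2) + m) + 2 * (m * (m + 2 * j)) + 2 * (m * (m + 1) / 2) := by
      ring
    rw [eL, t1, hcan]
    ring
  exact Nat.eq_of_mul_eq_mul_left (by norm_num) (Nat.add_right_cancel main)


lemma TW (j m i : ℕ) (him : i ≤ m) :
    (-1 : K) ^ (j + m - (j + i)) * q ^ ((j + m - (j + i)) * (5 * (j + m) + 3 * (j + i) + 1) / 2)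
      * qbinom (j + m) (j + i) * qbinom (j + m + (j + i)) (j + i)
      * (q ^ (2 * (j + i) * (j + i - j)) * qbinom (j + i) j ^ 2 * qbinom (2 * j) j)
    = ((-1) ^ m * q ^ (m * (m - 1) / 2 + m * (m + 2 * j))
        * (D (2 * j) * D (m + 2 * j) / (D j ^ 4 * D m ^ 2))) * sS m i (q ^ (m + 2 * j + 1)) q := by
  obtain ⟨a, rfl⟩ : ∃ a, m = i + a := ⟨m - i, by omega⟩
  simp only [sS, show j + (i + a) - (j + i) = a from by omega, show j + i - j = i from by omega,
    show i + a - i = a from by omega]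
  rw [qbinom_eq (show j + i ≤ j + (i + a) by omega),
      qbinom_eq (show j + i ≤ j + (i + a) + (j + i) by omega),
      qbinom_eq (show j ≤ j + i by omega), qbinom_eq (show j ≤ 2 * j by omega),
      qbinom_eq (show i ≤ i + a by omega)]
  simp only [show j + (i + a) - (j + i) = a from by omega,
    show j + (i + a) + (j + i) - (j + i) = j + (i + a) from by omega,
    show j + i - j = i from by omega, show 2 * j - j = j from by omega,
    show i + a - i = a from by omega]
  have hq1 : (q : K) * q ^ i = q ^ (i + 1) := by rw [pow_succ]; ring
  rw [hq1, pochD_div i a, pochD_div (i + a + 2 * j) i, ← pow_mul q (i + a + 2 * j + 1) a]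
  rw [show j + (i + a) + (j + i) = i + a + 2 * j + i from by omega]
  have hs : ((-1 : K) ^ (i + a)) * (-1) ^ i = (-1) ^ a := by
    rw [pow_add]
    have h2 : ((-1 : K) ^ i) * (-1) ^ i = 1 := by
      rw [← pow_add]; exact Even.neg_one_pow ⟨i, rfl⟩
    calc ((-1:K)^i * (-1)^a) * (-1)^i = ((-1:K)^i * (-1)^i) * (-1)^a := by ring
    _ = (-1)^a := by rw [h2, one_mul]
  have hpow : (q : K) ^ (a * (5 * (j + (i + a)) + 3 * (j + i) + 1) / 2) * q ^ (2 * (j + i) * i)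
      = q ^ ((i + a) * ((i + a) - 1) / 2 + (i + a) * ((i + a) + 2 * j))
        * (q ^ (i * (i - 1) / 2) * (q ^ i * q ^ ((i + a + 2 * j + 1) * a))) := by
    rw [← pow_add, ← pow_add, ← pow_add, ← pow_add]
    exact congrArg (q ^ ·) (exp' a i j)
  have hg : (-1:K)^a * ((q:K) ^ (a * (5 * (j + (i + a)) + 3 * (j + i) + 1) / 2) * q ^ (2 * (j + i) * i))
      = (-1)^(i+a) * ((-1)^i * (q ^ ((i + a) * ((i + a) - 1) / 2 + (i + a) * ((i + a) + 2 * j))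
        * (q ^ (i * (i - 1) / 2) * (q ^ i * q ^ ((i + a + 2 * j + 1) * a))))) := by
    rw [← hs, hpow]
    ring
  have hCLR : (D (j + (i + a)) / (D (j + i) * D a))
        * (D (i + a + 2 * j + i) / (D (j + i) * D (j + (i + a))))
        * (D (j + i) / (D j * D i)) ^ 2 * (D (2 * j) / (D j * D j))
      = (D (2 * j) * D (i + a + 2 * j) / (D j ^ 4 * D (i + a) ^ 2))
        * ((D (i + a) / (D i * D a)) * (D (i + a + 2 * j + i) / D (i + a + 2 * j))
          * (D (i + a) / D i)) := by
    simp only [div_pow, div_mul_div_comm]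
    rw [div_eq_div_iff (by simp [mul_eq_zero, pow_eq_zero_iff, D_ne])
      (by simp [mul_eq_zero, pow_eq_zero_iff, D_ne])]
    ring
  trans (((-1:K)^a * ((q:K) ^ (a * (5 * (j + (i + a)) + 3 * (j + i) + 1) / 2) * q ^ (2 * (j + i) * i)))
    * ((D (j + (i + a)) / (D (j + i) * D a))
        * (D (i + a + 2 * j + i) / (D (j + i) * D (j + (i + a))))
        * (D (j + i) / (D j * D i)) ^ 2 * (D (2 * j) / (D j * D j))))
  · ring
  · rw [hg, hCLR]
    ring


lemma prod_eval (j m : ℕ) :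
    ∏ t ∈ range m, ((q : K) ^ (m + 2 * j + 1) - q * q ^ t)
      = (-1) ^ m * q ^ (m * (m + 1) / 2) * (D (m + 2 * j) / D (2 * j)) := by
  have h1 : ∏ t ∈ range m, ((q : K) ^ (m + 2 * j + 1) - q * q ^ t)
      = ∏ t ∈ range m, ((-1 : K) * (q ^ (t + 1) * (1 - q ^ (m + 2 * j - t)))) := by
    apply Finset.prod_congr rfl
    intro t ht
    have htm : t < m := mem_range.mp ht
    have e : (q : K) ^ (m + 2 * j + 1) = q ^ (t + 1) * q ^ (m + 2 * j - t) := by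
      rw [← pow_add]; congr 1; omega
    have e2 : (q : K) * q ^ t = q ^ (t + 1) := by rw [pow_succ]; ring
    rw [e, e2]; ring
  rw [h1, Finset.prod_mul_distrib, Finset.prod_mul_distrib, Finset.prod_const, card_range]
  have h2 : ∏ t ∈ range m, (q : K) ^ (t + 1) = q ^ (m * (m + 1) / 2) := by
    rw [Finset.prod_pow_eq_pow_sum]
    congr 1
    have e5 : ∑ t ∈ range (m + 1), t = (m + 1) * m / 2 := by
      simpa using Finset.sum_range_id (m + 1)
    have e6 : ∑ t ∈ range m, (t + 1) = ∑ t ∈ range (m + 1), t := by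
      rw [Finset.sum_range_succ' (fun t => t) m]
      simp
    rw [e6, e5, Nat.mul_comm]
  have h3 : ∏ t ∈ range m, (1 - (q : K) ^ (m + 2 * j - t)) = D (m + 2 * j) / D (2 * j) := by
    rw [← Finset.prod_range_reflect]
    have h4 : ∀ t ∈ range m, (1 - (q : K) ^ (m + 2 * j - (m - 1 - t))) = 1 - q ^ (2 * j + 1 + t) := by
      intro t ht
      have htm : t < m := mem_range.mp ht
      rw [show m + 2 * j - (m - 1 - t) = 2 * j + 1 + t from by omega]
    rw [Finset.prod_congr rfl h4]
    have h5 : ∏ t ∈ range m, (1 - (q : K) ^ (2 * j + 1 + t)) = poch (q ^ (2 * j + 1)) m := by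
      apply Finset.prod_congr rfl
      intro t ht
      rw [pow_add]
    rw [h5, pochD_div (2 * j) m, show 2 * j + m = m + 2 * j from by omega]
  rw [h2, h3]
  ring

lemma core (j m : ℕ) :
    ∑ k ∈ range (j + m + 1),
      (-1 : K) ^ (j + m - k) * q ^ ((j + m - k) * (5 * (j + m) + 3 * k + 1) / 2)
        * qbinom (j + m) k * qbinom (j + m + k) k
        * (q ^ (2 * k * (k - j)) * qbinom k j ^ 2 * qbinom (2 * j) j)
      = q ^ (2 * (j + m) * m) * qbinom (j + m) j ^ 2 * qbinom (j + m + j) j ^ 2 := by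
  rw [show j + m + 1 = j + (m + 1) from by omega, Finset.sum_range_add]
  have hz : ∑ k ∈ range j,
      ((-1 : K) ^ (j + m - k) * q ^ ((j + m - k) * (5 * (j + m) + 3 * k + 1) / 2)
        * qbinom (j + m) k * qbinom (j + m + k) k
        * (q ^ (2 * k * (k - j)) * qbinom k j ^ 2 * qbinom (2 * j) j)) = 0 := by
    apply Finset.sum_eq_zero
    intro k hk
    rw [qbinom_zero_of_lt (mem_range.mp hk)]
    ring
  rw [hz, zero_add]
  have ht : ∀ i ∈ range (m + 1),
      ((-1 : K) ^ (j + m - (j + i)) * q ^ ((j + m - (j + i)) * (5 * (j + m) + 3 * (j + i) + 1) / 2)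
        * qbinom (j + m) (j + i) * qbinom (j + m + (j + i)) (j + i)
        * (q ^ (2 * (j + i) * (j + i - j)) * qbinom (j + i) j ^ 2 * qbinom (2 * j) j))
      = ((-1) ^ m * q ^ (m * (m - 1) / 2 + m * (m + 2 * j))
          * (D (2 * j) * D (m + 2 * j) / (D j ^ 4 * D m ^ 2))) * sS m i (q ^ (m + 2 * j + 1)) q :=
    fun i hi => TW j m i (Nat.lt_succ_iff.mp (mem_range.mp hi))
  rw [Finset.sum_congr rfl ht, ← Finset.mul_sum, star m (q ^ (m + 2 * j + 1)) q, prod_eval j m]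
  rw [qbinom_eq (show j ≤ j + m by omega), qbinom_eq (show j ≤ j + m + j by omega)]
  simp only [show j + m - j = m from by omega, show j + m + j - j = j + m from by omega]
  simp only [show j + m + j = m + 2 * j from by omega]
  have hsgn : ((-1 : K) ^ m) * (-1) ^ m = 1 := by
    rw [← pow_add]; exact Even.neg_one_pow ⟨m, rfl⟩
  have hpw : (q : K) ^ (m * (m - 1) / 2 + m * (m + 2 * j)) * q ^ (m * (m + 1) / 2)
      = q ^ (2 * (j + m) * m) := by
    rw [← pow_add, exp2]
  trans ((((-1 : K) ^ m) * (-1) ^ m) * ((q : K) ^ (m * (m - 1) / 2 + m * (m + 2 * j)) * q ^ (m * (m + 1) / 2))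
      * (D (2 * j) * D (m + 2 * j) * D (m + 2 * j) / (D j ^ 4 * D m ^ 2 * D (2 * j))))
  · ring
  rw [hsgn, hpw, one_mul]
  field_simp [D_ne]

end QAux

theorem q_apery_identity (n : ℕ) (x : RatFunc ℚ) :
    Aq x n = ∑ k ∈ Finset.range (n + 1),
      (-1 : RatFunc ℚ) ^ (n - k) * RatFunc.X ^ ((n - k) * (5 * n + 3 * k + 1) / 2) *
        qbinom n k * qbinom (n + k) k * gq x k := by
  have hg : ∀ k, k ≤ n → gq x k = ∑ j ∈ Finset.range (n + 1),
      RatFunc.X ^ (2 * k * (k - j)) * qbinom k j ^ 2 * qbinom (2 * j) j * x ^ j := by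
    intro k hk
    rw [gq]
    apply Finset.sum_subset
    · intro t ht
      rw [Finset.mem_range] at *
      omega
    · intro j hj hnj
      rw [Finset.mem_range] at hj hnj
      have hkj : k < j := by omega
      rw [QAux.qbinom_zero_of_lt hkj]
      ring
  rw [Aq]
  symm
  calc ∑ k ∈ Finset.range (n + 1),
      (-1 : RatFunc ℚ) ^ (n - k) * RatFunc.X ^ ((n - k) * (5 * n + 3 * k + 1) / 2) *
        qbinom n k * qbinom (n + k) k * gq x k
      = ∑ k ∈ Finset.range (n + 1), ∑ j ∈ Finset.range (n + 1),
        (-1 : RatFunc ℚ) ^ (n - k) * RatFunc.X ^ ((n - k) * (5 * n + 3 * k + 1) / 2) *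
          qbinom n k * qbinom (n + k) k *
          (RatFunc.X ^ (2 * k * (k - j)) * qbinom k j ^ 2 * qbinom (2 * j) j * x ^ j) := by
        apply Finset.sum_congr rfl
        intro k hk
        rw [Finset.mem_range] at hk
        rw [hg k (by omega), Finset.mul_sum]
    _ = ∑ j ∈ Finset.range (n + 1), ∑ k ∈ Finset.range (n + 1),
        (-1 : RatFunc ℚ) ^ (n - k) * RatFunc.X ^ ((n - k) * (5 * n + 3 * k + 1) / 2) *
          qbinom n k * qbinom (n + k) k *
          (RatFunc.X ^ (2 * k * (k - j)) * qbinom k j ^ 2 * qbinom (2 * j) j * x ^ j) :=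
        Finset.sum_comm
    _ = ∑ j ∈ Finset.range (n + 1),
        RatFunc.X ^ (2 * n * (n - j)) * qbinom n j ^ 2 * qbinom (n + j) j ^ 2 * x ^ j := by
        apply Finset.sum_congr rfl
        intro j hj
        rw [Finset.mem_range] at hj
        obtain ⟨m, rfl⟩ : ∃ m, n = j + m := ⟨n - j, by omega⟩
        have h3 : ∀ k ∈ Finset.range (j + m + 1),
            (-1 : RatFunc ℚ) ^ (j + m - k) * RatFunc.X ^ ((j + m - k) * (5 * (j + m) + 3 * k + 1) / 2) *
              qbinom (j + m) k * qbinom (j + m + k) k *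
              (RatFunc.X ^ (2 * k * (k - j)) * qbinom k j ^ 2 * qbinom (2 * j) j * x ^ j)
            = ((-1 : RatFunc ℚ) ^ (j + m - k) * RatFunc.X ^ ((j + m - k) * (5 * (j + m) + 3 * k + 1) / 2) *
              qbinom (j + m) k * qbinom (j + m + k) k *
              (RatFunc.X ^ (2 * k * (k - j)) * qbinom k j ^ 2 * qbinom (2 * j) j)) * x ^ j :=
          fun k _ => by ring
        rw [Finset.sum_congr rfl h3, ← Finset.sum_mul, QAux.core j m,
          show j + m - j = m from by omega]
end

section
/- For every positive integer n, n³ divides ∑_{k=0}^{n-1} (−1)^k·(6k³ + 9k² + 5k + 1)·A_k. -/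
/-- The Apéry numbers `A n = ∑_{k=0}^n (n choose k)² (n+k choose k)²`. -/
def apery (n : ℕ) : ℤ :=
  ∑ k ∈ Finset.range (n + 1), (n.choose k : ℤ) ^ 2 * ((n + k).choose k : ℤ) ^ 2

/-- Cofactor sequence: `S (m+1) = (-1)^m (m+1)^3 * d m`. -/
def dd (m : ℕ) : ℤ :=
  ∑ k ∈ Finset.range (m + 1),
    (m.choose k : ℤ) * ((m + 1).choose k : ℤ) * ((m + k).choose k : ℤ) * ((m + 1 + k).choose k : ℤ)

/-- Telescoping certificate. -/
def gg (m k : ℕ) : ℤ :=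
  2 * (2 * (m : ℤ) + 3) * (k : ℤ) ^ 2 * ((m + 1).choose k : ℤ) * ((m + 1).choose (k - 1) : ℤ) *
    ((m + 1 + k).choose k : ℤ) * ((m + k).choose (k - 1) : ℤ)

set_option maxHeartbeats 4000000 in
lemma term_eq (m k : ℕ) (hk : k ≤ m + 1) :
    (6 * ((m : ℤ) + 1) ^ 3 + 9 * ((m : ℤ) + 1) ^ 2 + 5 * ((m : ℤ) + 1) + 1) *
        ((m + 1).choose k : ℤ) ^ 2 * ((m + 1 + k).choose k : ℤ) ^ 2
      = ((m : ℤ) + 2) ^ 3 * ((m + 1).choose k : ℤ) * ((m + 2).choose k : ℤ) *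
          ((m + 1 + k).choose k : ℤ) * ((m + 2 + k).choose k : ℤ)
        + ((m : ℤ) + 1) ^ 3 * (m.choose k : ℤ) * ((m + 1).choose k : ℤ) *
          ((m + k).choose k : ℤ) * ((m + 1 + k).choose k : ℤ)
        + (gg m (k + 1) - gg m k) := by
  rcases k with _ | j
  · simp only [gg, Nat.choose_zero_right, Nat.add_zero, Nat.choose_self]
    simp [Nat.choose_one_right]
    push_cast
    ring
  · -- k = j + 1, with j ≤ m; write m = j + s
    obtain ⟨s, rfl⟩ : ∃ s, m = j + s := ⟨m - j, by omega⟩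
    -- we prove the corresponding identity in ℚ and cast back
    have key : ((6 * ((j + s : ℕ) + 1) ^ 3 + 9 * ((j + s : ℕ) + 1) ^ 2 + 5 * ((j + s : ℕ) + 1) + 1) *
        ((j + s + 1).choose (j + 1)) ^ 2 * ((j + s + 1 + (j + 1)).choose (j + 1)) ^ 2 : ℚ)
      = ((j + s : ℕ) + 2) ^ 3 * ((j + s + 1).choose (j + 1)) * ((j + s + 2).choose (j + 1)) *
          ((j + s + 1 + (j + 1)).choose (j + 1)) * ((j + s + 2 + (j + 1)).choose (j + 1))
        + ((j + s : ℕ) + 1) ^ 3 * ((j + s).choose (j + 1)) * ((j + s + 1).choose (j + 1)) *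
          ((j + s + (j + 1)).choose (j + 1)) * ((j + s + 1 + (j + 1)).choose (j + 1))
        + (2 * (2 * (j + s : ℕ) + 3) * ((j : ℚ) + 2) ^ 2 * ((j + s + 1).choose (j + 2)) *
            ((j + s + 1).choose (j + 1)) * ((j + s + 1 + (j + 2)).choose (j + 2)) *
            ((j + s + (j + 2)).choose (j + 1))
          - 2 * (2 * (j + s : ℕ) + 3) * ((j : ℚ) + 1) ^ 2 * ((j + s + 1).choose (j + 1)) *
            ((j + s + 1).choose j) * ((j + s + 1 + (j + 1)).choose (j + 1)) *
            ((j + s + (j + 1)).choose j)) := by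
      -- normalize all the big choose arguments
      have e1 : j + s + 1 + (j + 1) = j + j + s + 2 := by omega
      have e2 : j + s + 2 + (j + 1) = j + j + s + 3 := by omega
      have e3 : j + s + (j + 1) = j + j + s + 1 := by omega
      have e4 : j + s + 1 + (j + 2) = j + j + s + 3 := by omega
      have e5 : j + s + (j + 2) = j + j + s + 2 := by omega
      rw [e1, e2, e3, e4, e5]
      set a : ℚ := ((j + s + 1).choose (j + 1) : ℚ) with ha
      set b : ℚ := ((j + j + s + 2).choose (j + 1) : ℚ) with hb
      -- relations expressing all other binomials via a and b
      have r2 : ((j + s + 2).choose (j + 1) : ℚ) = ((j : ℚ) + (s : ℚ) + 2) * a / ((s : ℚ) + 1) := by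
        have h := Nat.choose_mul_succ_eq (j + s + 1) (j + 1)
        have h2 : j + s + 1 + 1 - (j + 1) = s + 1 := by omega
        rw [h2] at h
        have h3 : ((j + s + 1).choose (j + 1) * (j + s + 1 + 1) : ℚ)
            = ((j + s + 1 + 1).choose (j + 1) : ℚ) * ((s : ℚ) + 1) := by exact_mod_cast congrArg (Nat.cast : ℕ → ℚ) h
        have h4 : (j + s + 1 + 1) = (j + s + 2) := by omega
        rw [h4] at h3
        field_simp
        push_cast at h3 ⊢
        linarith [h3]
      have r3 : ((j + s).choose (j + 1) : ℚ) = (s : ℚ) * a / ((j : ℚ) + (s : ℚ) + 1) := by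
        have h := Nat.choose_mul_succ_eq (j + s) (j + 1)
        have h2 : j + s + 1 - (j + 1) = s := by omega
        rw [h2] at h
        have h3 : ((j + s).choose (j + 1) * (j + s + 1) : ℚ)
            = ((j + s + 1).choose (j + 1) : ℚ) * (s : ℚ) := by exact_mod_cast congrArg (Nat.cast : ℕ → ℚ) h
        field_simp
        push_cast at h3 ⊢
        linarith [h3]
      have r5 : ((j + j + s + 3).choose (j + 1) : ℚ)
          = b * ((j : ℚ) + (j : ℚ) + (s : ℚ) + 3) / ((j : ℚ) + (s : ℚ) + 2) := by
        have h := Nat.choose_mul_succ_eq (j + j + s + 2) (j + 1)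
        have h2 : j + j + s + 2 + 1 - (j + 1) = j + s + 2 := by omega
        rw [h2] at h
        have h3 : ((j + j + s + 2).choose (j + 1) * (j + j + s + 2 + 1) : ℚ)
            = ((j + j + s + 2 + 1).choose (j + 1) : ℚ) * ((j : ℚ) + (s : ℚ) + 2) := by
          exact_mod_cast congrArg (Nat.cast : ℕ → ℚ) h
        have h4 : (j + j + s + 2 + 1) = (j + j + s + 3) := by omega
        rw [h4] at h3
        field_simp
        push_cast at h3 ⊢
        linarith [h3]
      have r6 : ((j + j + s + 1).choose (j + 1) : ℚ)
          = b * ((j : ℚ) + (s : ℚ) + 1) / ((j : ℚ) + (j : ℚ) + (s : ℚ) + 2) := by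
        have h := Nat.choose_mul_succ_eq (j + j + s + 1) (j + 1)
        have h2 : j + j + s + 1 + 1 - (j + 1) = j + s + 1 := by omega
        rw [h2] at h
        have h3 : ((j + j + s + 1).choose (j + 1) * (j + j + s + 1 + 1) : ℚ)
            = ((j + j + s + 1 + 1).choose (j + 1) : ℚ) * ((j : ℚ) + (s : ℚ) + 1) := by
          exact_mod_cast congrArg (Nat.cast : ℕ → ℚ) h
        have h4 : (j + j + s + 1 + 1) = (j + j + s + 2) := by omega
        rw [h4] at h3
        field_simp
        push_cast at h3 ⊢
        linarith [h3]
      have r7 : ((j + s + 1).choose j : ℚ) = a * ((j : ℚ) + 1) / ((s : ℚ) + 1) := by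
        have h := Nat.choose_succ_right_eq (j + s + 1) j
        have h2 : j + s + 1 - j = s + 1 := by omega
        rw [h2] at h
        have h3 : ((j + s + 1).choose (j + 1) * (j + 1) : ℚ)
            = ((j + s + 1).choose j : ℚ) * ((s : ℚ) + 1) := by
          exact_mod_cast congrArg (Nat.cast : ℕ → ℚ) h
        field_simp
        push_cast at h3 ⊢
        linarith [h3]
      have r9 : ((j + s + 1).choose (j + 2) : ℚ) = a * (s : ℚ) / ((j : ℚ) + 2) := by
        have h := Nat.choose_succ_right_eq (j + s + 1) (j + 1)
        have h2 : j + s + 1 - (j + 1) = s := by omega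
        rw [h2] at h
        have h3 : ((j + s + 1).choose (j + 1 + 1) * (j + 1 + 1) : ℚ)
            = ((j + s + 1).choose (j + 1) : ℚ) * (s : ℚ) := by
          exact_mod_cast congrArg (Nat.cast : ℕ → ℚ) h
        have h4 : j + 1 + 1 = j + 2 := by omega
        rw [h4] at h3
        field_simp
        push_cast at h3 ⊢
        linarith [h3]
      have r8 : ((j + j + s + 1).choose j : ℚ)
          = b * ((j : ℚ) + 1) / ((j : ℚ) + (j : ℚ) + (s : ℚ) + 2) := by
        have h := Nat.add_one_mul_choose_eq (j + j + s + 1) j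
        have h3 : ((j + j + s + 1).succ * (j + j + s + 1).choose j : ℚ)
            = ((j + j + s + 1 + 1).choose (j + 1) : ℚ) * ((j : ℚ) + 1) := by
          exact_mod_cast congrArg (Nat.cast : ℕ → ℚ) h
        have h4 : (j + j + s + 1 + 1) = (j + j + s + 2) := by omega
        rw [h4] at h3
        rw [Nat.succ_eq_add_one] at h3
        field_simp
        push_cast at h3 ⊢
        linarith [h3]
      have r10 : ((j + j + s + 3).choose (j + 2) : ℚ)
          = b * ((j : ℚ) + (j : ℚ) + (s : ℚ) + 3) / ((j : ℚ) + 2) := by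
        have h := Nat.add_one_mul_choose_eq (j + j + s + 2) (j + 1)
        have h3 : ((j + j + s + 2).succ * (j + j + s + 2).choose (j + 1) : ℚ)
            = ((j + j + s + 2 + 1).choose (j + 1 + 1) : ℚ) * ((j : ℚ) + 1 + 1) := by
          exact_mod_cast congrArg (Nat.cast : ℕ → ℚ) h
        have h4 : (j + j + s + 2 + 1) = (j + j + s + 3) := by omega
        have h5 : j + 1 + 1 = j + 2 := by omega
        rw [h4, h5] at h3
        rw [Nat.succ_eq_add_one] at h3
        field_simp
        push_cast at h3 ⊢
        linarith [h3]
      rw [r2, r3, r5, r6, r7, r8, r9, r10]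
      have hs1 : ((s : ℚ) + 1) ≠ 0 := by positivity
      have hj2 : ((j : ℚ) + 2) ≠ 0 := by positivity
      have hjs1 : ((j : ℚ) + (s : ℚ) + 1) ≠ 0 := by positivity
      have hjs2 : ((j : ℚ) + (s : ℚ) + 2) ≠ 0 := by positivity
      have hjjs2 : ((j : ℚ) + (j : ℚ) + (s : ℚ) + 2) ≠ 0 := by positivity
      push_cast
      field_simp
      ring
    -- now transfer the ℚ identity back to ℤ
    simp only [gg]
    simp only [show j + 1 - 1 = j by omega, show j + 1 + 1 - 1 = j + 1 by omega,
      show j + 1 + 1 = j + 2 by omega]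
    apply Int.cast_injective (α := ℚ)
    push_cast at key ⊢
    linear_combination key

lemma gg_zero (m : ℕ) : gg m 0 = 0 := by simp [gg]

lemma gg_top (m : ℕ) : gg m (m + 2) = 0 := by
  have : (m + 1).choose (m + 2) = 0 := Nat.choose_eq_zero_of_lt (by omega)
  simp [gg, this]

lemma step (m : ℕ) :
    (6 * ((m : ℤ) + 1) ^ 3 + 9 * ((m : ℤ) + 1) ^ 2 + 5 * ((m : ℤ) + 1) + 1) * apery (m + 1)
      = ((m : ℤ) + 2) ^ 3 * dd (m + 1) + ((m : ℤ) + 1) ^ 3 * dd m := by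
  have hA : (6 * ((m : ℤ) + 1) ^ 3 + 9 * ((m : ℤ) + 1) ^ 2 + 5 * ((m : ℤ) + 1) + 1) * apery (m + 1)
      = ∑ k ∈ Finset.range (m + 2),
        (6 * ((m : ℤ) + 1) ^ 3 + 9 * ((m : ℤ) + 1) ^ 2 + 5 * ((m : ℤ) + 1) + 1) *
          ((m + 1).choose k : ℤ) ^ 2 * ((m + 1 + k).choose k : ℤ) ^ 2 := by
    rw [apery, Finset.mul_sum]
    exact Finset.sum_congr rfl fun k _ => by ring
  have hd1 : ((m : ℤ) + 2) ^ 3 * dd (m + 1)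
      = ∑ k ∈ Finset.range (m + 2),
        ((m : ℤ) + 2) ^ 3 * ((m + 1).choose k : ℤ) * ((m + 2).choose k : ℤ) *
          ((m + 1 + k).choose k : ℤ) * ((m + 2 + k).choose k : ℤ) := by
    rw [dd, Finset.mul_sum]
    exact Finset.sum_congr rfl fun k _ => by
      have e1 : m + 1 + 1 = m + 2 := by omega
      have e2 : m + 1 + 1 + k = m + 2 + k := by omega
      rw [e1, e2]; ring
  have hd0 : ((m : ℤ) + 1) ^ 3 * dd m
      = ∑ k ∈ Finset.range (m + 2),
        ((m : ℤ) + 1) ^ 3 * (m.choose k : ℤ) * ((m + 1).choose k : ℤ) *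
          ((m + k).choose k : ℤ) * ((m + 1 + k).choose k : ℤ) := by
    rw [dd, Finset.mul_sum]
    rw [Finset.sum_range_succ
      (fun k => ((m : ℤ) + 1) ^ 3 * (m.choose k : ℤ) * ((m + 1).choose k : ℤ) *
          ((m + k).choose k : ℤ) * ((m + 1 + k).choose k : ℤ)) (m + 1)]
    have hz : m.choose (m + 1) = 0 := Nat.choose_eq_zero_of_lt (by omega)
    rw [hz]
    push_cast
    simp only [mul_zero, zero_mul, add_zero]
    exact Finset.sum_congr rfl fun k _ => by ring
  have htel : ∑ k ∈ Finset.range (m + 2), (gg m (k + 1) - gg m k) = 0 := by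
    rw [Finset.sum_range_sub (gg m), gg_top, gg_zero, sub_zero]
  rw [hA, hd1, hd0, ← Finset.sum_add_distrib]
  have := htel
  calc ∑ k ∈ Finset.range (m + 2),
        (6 * ((m : ℤ) + 1) ^ 3 + 9 * ((m : ℤ) + 1) ^ 2 + 5 * ((m : ℤ) + 1) + 1) *
          ((m + 1).choose k : ℤ) ^ 2 * ((m + 1 + k).choose k : ℤ) ^ 2
      = ∑ k ∈ Finset.range (m + 2),
        (((m : ℤ) + 2) ^ 3 * ((m + 1).choose k : ℤ) * ((m + 2).choose k : ℤ) *
          ((m + 1 + k).choose k : ℤ) * ((m + 2 + k).choose k : ℤ)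
        + ((m : ℤ) + 1) ^ 3 * (m.choose k : ℤ) * ((m + 1).choose k : ℤ) *
          ((m + k).choose k : ℤ) * ((m + 1 + k).choose k : ℤ)
        + (gg m (k + 1) - gg m k)) := by
        refine Finset.sum_congr rfl fun k hk => ?_
        exact term_eq m k (by simpa using Nat.lt_succ_iff.mp (Finset.mem_range.mp hk))
    _ = _ := by
        rw [Finset.sum_add_distrib, htel, add_zero]

lemma key_identity (m : ℕ) :
    ∑ k ∈ Finset.range (m + 1),
      (-1 : ℤ) ^ k * (6 * (k : ℤ) ^ 3 + 9 * (k : ℤ) ^ 2 + 5 * (k : ℤ) + 1) * apery k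
      = (-1 : ℤ) ^ m * ((m : ℤ) + 1) ^ 3 * dd m := by
  induction m with
  | zero => simp [apery, dd]
  | succ m ih =>
    rw [Finset.sum_range_succ, ih]
    have hstep := step m
    push_cast at hstep ⊢
    linear_combination ((-1 : ℤ) ^ (m + 1)) * hstep

theorem cube_dvd_sum_apery (n : ℕ) (hn : 0 < n) :
    (n : ℤ) ^ 3 ∣ ∑ k ∈ Finset.range n,
      (-1 : ℤ) ^ k * (6 * (k : ℤ) ^ 3 + 9 * (k : ℤ) ^ 2 + 5 * (k : ℤ) + 1) * apery k := by
  obtain ⟨m, rfl⟩ : ∃ m, n = m + 1 := ⟨n - 1, by omega⟩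
  refine ⟨(-1 : ℤ) ^ m * dd m, ?_⟩
  rw [key_identity m]
  push_cast
  ring
end
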